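/- arXiv:1512.04046 — 6 statements merged into one kernel-verified Lean document; each statement's English description precedes it below -/
import Mathlib

section
/- Let (R, ∇R, ∇²R) be an Einstein algebraic two-jet on V (i.e. ric_R = c⟪·,·⟫ for some c ∈ ℝ, ∇ric = 0 and ∇²ric = 0), let S := Young(4,2)[(x₁,…,x₆) ↦ ∇²_{x₅,x₆}R(x₁,x₂,x₃,x₄)], and define ∇̃²_{x₅,x₆}r̃ic(x₂,x₄) := −Σᵢ S(eᵢ,x₂,eᵢ,x₄,x₅,x₆). Then for all x₂,x₄,x₅,x₆ ∈ V: ∇̃²_{x₅,x₆}r̃ic(x₂,x₄) = −4·( R*R(x₅,x₂,x₆,x₄) + R*R(x₅,x₄,x₆,x₂) ). -/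
open scoped RealInnerProductSpace

namespace CurvJet

variable {V : Type*} [NormedAddCommGroup V] [InnerProductSpace ℝ V] {n : ℕ}

/-- Quadrilinear forms on `V`, the ambient space of algebraic curvature tensors. -/
abbrev Curv (V : Type*) [NormedAddCommGroup V] [InnerProductSpace ℝ V] : Type _ :=
  V →ₗ[ℝ] V →ₗ[ℝ] V →ₗ[ℝ] V →ₗ[ℝ] ℝ

/-- The underlying 4-argument function of a quadrilinear form. -/
def toFun4 (R : Curv V) : V → V → V → V → ℝ := fun z₁ z₂ z₃ z₄ => R z₁ z₂ z₃ z₄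

/-- `R` is an algebraic curvature tensor: antisymmetry in the first pair, pair symmetry,
and the first Bianchi identity. -/
def IsCurv (R : Curv V) : Prop :=
  (∀ x y z w, R x y z w = - R y x z w) ∧
  (∀ x y z w, R x y z w = R z w x y) ∧
  (∀ x y z w, R x y z w + R y z x w + R z x y w = 0)

/-- The Ricci tensor `ric_R(x,y) = -∑ᵢ R(x,eᵢ,y,eᵢ)`. -/
noncomputable def ric (e : OrthonormalBasis (Fin n) ℝ V) (R : Curv V) (x y : V) : ℝ :=
  - ∑ i, R x (e i) y (e i)

/-- The curvature endomorphism `R_{x,y}`, characterized by `⟪R_{x,y}z, w⟫ = R(x,y,z,w)`. -/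
noncomputable def curvEnd (e : OrthonormalBasis (Fin n) ℝ V) (R : Curv V) (x y z : V) : V :=
  ∑ i, R x y z (e i) • e i

/-- Action of an endomorphism `B` on a covariant 4-tensor by algebraic derivation. -/
def act4 (B : V → V) (A : V → V → V → V → ℝ) (x₁ x₂ x₃ x₄ : V) : ℝ :=
  -(A (B x₁) x₂ x₃ x₄ + A x₁ (B x₂) x₃ x₄ + A x₁ x₂ (B x₃) x₄ + A x₁ x₂ x₃ (B x₄))

/-- Action of an endomorphism `B` on a covariant 2-tensor by algebraic derivation. -/
def act2 (B : V → V) (A : V → V → ℝ) (x y : V) : ℝ :=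
  -(A (B x) y + A x (B y))

/-- `R*A` for a covariant 4-tensor `A`. -/
noncomputable def star4 (e : OrthonormalBasis (Fin n) ℝ V) (R : Curv V)
    (A : V → V → V → V → ℝ) (x₁ x₂ x₃ x₄ : V) : ℝ :=
  -((∑ j, act4 (curvEnd e R x₁ (e j)) A (e j) x₂ x₃ x₄)
    + (∑ j, act4 (curvEnd e R x₂ (e j)) A x₁ (e j) x₃ x₄)
    + (∑ j, act4 (curvEnd e R x₃ (e j)) A x₁ x₂ (e j) x₄)
    + (∑ j, act4 (curvEnd e R x₄ (e j)) A x₁ x₂ x₃ (e j)))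

/-- `R*A` for a covariant 2-tensor `A`. -/
noncomputable def star2 (e : OrthonormalBasis (Fin n) ℝ V) (R : Curv V)
    (A : V → V → ℝ) (x y : V) : ℝ :=
  -((∑ j, act2 (curvEnd e R x (e j)) A (e j) y)
    + (∑ j, act2 (curvEnd e R y (e j)) A x (e j)))

/-- The algebraic curvature tensor `R*R`. -/
noncomputable def RstarR (e : OrthonormalBasis (Fin n) ℝ V) (R : Curv V) :
    V → V → V → V → ℝ :=
  star4 e R (toFun4 R)

/-- Row symmetrization of the Young tableau with rows `{1,3}`, `{2,4}` on a 4-tensor. -/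
def rowSym22 (T : V → V → V → V → ℝ) (x₁ x₂ x₃ x₄ : V) : ℝ :=
  T x₁ x₂ x₃ x₄ + T x₃ x₂ x₁ x₄ + T x₁ x₄ x₃ x₂ + T x₃ x₄ x₁ x₂

/-- The Young symmetrizer of the tableau with rows `{1,3}`, `{2,4}` and columns
`{1,2}`, `{3,4}`, acting on 4-tensors. -/
def young22 (T : V → V → V → V → ℝ) (x₁ x₂ x₃ x₄ : V) : ℝ :=
  rowSym22 T x₁ x₂ x₃ x₄ - rowSym22 T x₂ x₁ x₃ x₄
    - rowSym22 T x₁ x₂ x₄ x₃ + rowSym22 T x₂ x₁ x₄ x₃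

/-- Row symmetrization of the Young tableau with rows `{1,3,5,6}`, `{2,4}` on a 6-tensor. -/
noncomputable def rowSym42 (T : V → V → V → V → V → V → ℝ) (x₁ x₂ x₃ x₄ x₅ x₆ : V) : ℝ :=
  ∑ σ : Equiv.Perm (Fin 4),
    (T (![x₁, x₃, x₅, x₆] (σ 0)) x₂ (![x₁, x₃, x₅, x₆] (σ 1)) x₄
        (![x₁, x₃, x₅, x₆] (σ 2)) (![x₁, x₃, x₅, x₆] (σ 3))
     + T (![x₁, x₃, x₅, x₆] (σ 0)) x₄ (![x₁, x₃, x₅, x₆] (σ 1)) x₂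
        (![x₁, x₃, x₅, x₆] (σ 2)) (![x₁, x₃, x₅, x₆] (σ 3)))

/-- The Young symmetrizer of the tableau on six slots with rows `{1,3,5,6}`, `{2,4}` and
columns `{1,2}`, `{3,4}`. -/
noncomputable def young42 (T : V → V → V → V → V → V → ℝ) (x₁ x₂ x₃ x₄ x₅ x₆ : V) : ℝ :=
  rowSym42 T x₁ x₂ x₃ x₄ x₅ x₆ - rowSym42 T x₂ x₁ x₃ x₄ x₅ x₆
    - rowSym42 T x₁ x₂ x₄ x₃ x₅ x₆ + rowSym42 T x₂ x₁ x₄ x₃ x₅ x₆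

/-- Row symmetrization of the Young tableau with rows `{1,3,5}`, `{2,4}` on a 5-tensor
(the fifth function argument is the slot lying in the first row). -/
noncomputable def rowSym5 (T : V → V → V → V → V → ℝ) (z₁ z₂ z₃ z₄ z₅ : V) : ℝ :=
  ∑ σ : Equiv.Perm (Fin 3),
    (T (![z₁, z₃, z₅] (σ 0)) z₂ (![z₁, z₃, z₅] (σ 1)) z₄ (![z₁, z₃, z₅] (σ 2))
     + T (![z₁, z₃, z₅] (σ 0)) z₄ (![z₁, z₃, z₅] (σ 1)) z₂ (![z₁, z₃, z₅] (σ 2)))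

/-- The Young symmetrizer of the tableau on five slots with rows `{1,3,5}`, `{2,4}` and
columns `{1,2}`, `{3,4}` (the fifth function argument is the slot in the first row). -/
noncomputable def young5 (T : V → V → V → V → V → ℝ) (z₁ z₂ z₃ z₄ z₅ : V) : ℝ :=
  rowSym5 T z₁ z₂ z₃ z₄ z₅ - rowSym5 T z₂ z₁ z₃ z₄ z₅
    - rowSym5 T z₁ z₂ z₄ z₃ z₅ + rowSym5 T z₂ z₁ z₄ z₃ z₅

/-- First-order jet conditions: each `∇ₓR` is a curvature tensor and the second Bianchi
identity holds. -/
def IsJet1 (D1 : V →ₗ[ℝ] Curv V) : Prop :=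
  (∀ x, IsCurv (D1 x)) ∧
  (∀ x y z u v, D1 x y z u v + D1 y z x u v + D1 z x y u v = 0)

/-- Second-order jet conditions: each `∇²_{x,y}R` is a curvature tensor, the second Bianchi
identity holds, and the Ricci identity `∇²_{x,y}R − ∇²_{y,x}R = R_{x,y}·R` holds. -/
def IsJet2 (e : OrthonormalBasis (Fin n) ℝ V) (R : Curv V)
    (D2 : V →ₗ[ℝ] V →ₗ[ℝ] Curv V) : Prop :=
  (∀ x y, IsCurv (D2 x y)) ∧
  (∀ x y z w u v, D2 x y z w u v + D2 x z w y u v + D2 x w y z u v = 0) ∧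
  (∀ x y z₁ z₂ z₃ z₄, D2 x y z₁ z₂ z₃ z₄ - D2 y x z₁ z₂ z₃ z₄ =
    act4 (curvEnd e R x y) (toFun4 R) z₁ z₂ z₃ z₄)

/-- Algebraic two-jet `(R, ∇R, ∇²R)`. -/
def IsTwoJet (e : OrthonormalBasis (Fin n) ℝ V) (R : Curv V)
    (D1 : V →ₗ[ℝ] Curv V) (D2 : V →ₗ[ℝ] V →ₗ[ℝ] Curv V) : Prop :=
  IsCurv R ∧ IsJet1 D1 ∧ IsJet2 e R D2

/-- `∇ₓric(y,z) = -∑ᵢ ∇ₓR(y,eᵢ,z,eᵢ)`. -/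
noncomputable def nablaRic (e : OrthonormalBasis (Fin n) ℝ V)
    (D1 : V →ₗ[ℝ] Curv V) (x y z : V) : ℝ :=
  - ∑ i, D1 x y (e i) z (e i)

/-- `∇²_{x,y}ric(z,w) = -∑ᵢ ∇²_{x,y}R(z,eᵢ,w,eᵢ)`. -/
noncomputable def nabla2Ric (e : OrthonormalBasis (Fin n) ℝ V)
    (D2 : V →ₗ[ℝ] V →ₗ[ℝ] Curv V) (x y z w : V) : ℝ :=
  - ∑ i, D2 x y z (e i) w (e i)

/-- The rough Laplacian `∇*∇R(z₁,z₂,z₃,z₄) = -∑ᵢ ∇²_{eᵢ,eᵢ}R(z₁,z₂,z₃,z₄)`. -/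
noncomputable def roughLap (e : OrthonormalBasis (Fin n) ℝ V)
    (D2 : V →ₗ[ℝ] V →ₗ[ℝ] Curv V) (z₁ z₂ z₃ z₄ : V) : ℝ :=
  - ∑ i, D2 (e i) (e i) z₁ z₂ z₃ z₄

/-- `∇ₓδ_yR(z,w) = -∑ᵢ ∇²_{x,eᵢ}R(eᵢ,y,z,w)`. -/
noncomputable def nablaDelta (e : OrthonormalBasis (Fin n) ℝ V)
    (D2 : V →ₗ[ℝ] V →ₗ[ℝ] Curv V) (x y z w : V) : ℝ :=
  - ∑ i, D2 x (e i) (e i) y z w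

/-- The two-jet is Einstein: `ric = c⟪·,·⟫`, `∇ric = 0` and `∇²ric = 0`. -/
def IsEinsteinJet (e : OrthonormalBasis (Fin n) ℝ V) (R : Curv V)
    (D1 : V →ₗ[ℝ] Curv V) (D2 : V →ₗ[ℝ] V →ₗ[ℝ] Curv V) : Prop :=
  (∃ c : ℝ, ∀ x y, ric e R x y = c * ⟪x, y⟫) ∧
  (∀ x y z, nablaRic e D1 x y z = 0) ∧
  (∀ x y z w, nabla2Ric e D2 x y z w = 0)


section Statement13Aux

variable {V : Type*} [NormedAddCommGroup V] [InnerProductSpace ℝ V] {n : ℕ}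
variable (e : OrthonormalBasis (Fin n) ℝ V) (R : Curv V) (D2 : V →ₗ[ℝ] V →ₗ[ℝ] Curv V)

set_option maxRecDepth 4000 in
private lemma perm4_univ : (Finset.univ : Finset (Equiv.Perm (Fin 4))) =
    {(1 : Equiv.Perm (Fin 4)), (Equiv.swap (2:Fin 4) 3), (Equiv.swap (1:Fin 4) 2), (Equiv.swap (1:Fin 4) 2 * Equiv.swap (2:Fin 4) 3), (Equiv.swap (1:Fin 4) 3 * Equiv.swap (3:Fin 4) 2), (Equiv.swap (1:Fin 4) 3), (Equiv.swap (0:Fin 4) 1), (Equiv.swap (0:Fin 4) 1 * Equiv.swap (2:Fin 4) 3), (Equiv.swap (0:Fin 4) 1 * Equiv.swap (1:Fin 4) 2), (Equiv.swap (0:Fin 4) 1 * Equiv.swap (1:Fin 4) 2 * Equiv.swap (2:Fin 4) 3), (Equiv.swap (0:Fin 4) 1 * Equiv.swap (1:Fin 4) 3 * Equiv.swap (3:Fin 4) 2), (Equiv.swap (0:Fin 4) 1 * Equiv.swap (1:Fin 4) 3), (Equiv.swap (0:Fin 4) 2 * Equiv.swap (2:Fin 4) 1), (Equiv.swap (0:Fin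 4) 2 * Equiv.swap (2:Fin 4) 3 * Equiv.swap (3:Fin 4) 1), (Equiv.swap (0:Fin 4) 2), (Equiv.swap (0:Fin 4) 2 * Equiv.swap (2:Fin 4) 3), (Equiv.swap (0:Fin 4) 2 * Equiv.swap (1:Fin 4) 3), (Equiv.swap (0:Fin 4) 2 * Equiv.swap (2:Fin 4) 1 * Equiv.swap (1:Fin 4) 3), (Equiv.swap (0:Fin 4) 3 * Equiv.swap (3:Fin 4) 2 * Equiv.swap (2:Fin 4) 1), (Equiv.swap (0:Fin 4) 3 * Equiv.swap (3:Fin 4) 1), (Equiv.swap (0:Fin 4) 3 * Equiv.swap (3:Fin 4) 2), (Equiv.swap (0:Fin 4) 3), (Equiv.swap (0:Fin 4) 3 * Equiv.swap (3:Fin 4) 1 * Equiv.swap (1:Fin 4) 2), (Equiv.swap (0:Fin 4) 3 * Equiv.swap (1:Fin 4) 2)} := by decide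

set_option maxRecDepth 4000 in
private lemma sum_perm_fin4 {M : Type*} [AddCommMonoid M] (f : Fin 4 → Fin 4 → Fin 4 → Fin 4 → M) :
    ∑ σ : Equiv.Perm (Fin 4), f (σ 0) (σ 1) (σ 2) (σ 3) = f 0 1 2 3 + f 0 1 3 2 + f 0 2 1 3 + f 0 2 3 1 + f 0 3 1 2 + f 0 3 2 1 + f 1 0 2 3 + f 1 0 3 2 + f 1 2 0 3 + f 1 2 3 0 + f 1 3 0 2 + f 1 3 2 0 + f 2 0 1 3 + f 2 0 3 1 + f 2 1 0 3 + f 2 1 3 0 + f 2 3 0 1 + f 2 3 1 0 + f 3 0 1 2 + f 3 0 2 1 + f 3 1 0 2 + f 3 1 2 0 + f 3 2 0 1 + f 3 2 1 0 := by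
  rw [perm4_univ]
  rw [Finset.sum_insert (by decide), Finset.sum_insert (by decide), Finset.sum_insert (by decide), Finset.sum_insert (by decide), Finset.sum_insert (by decide), Finset.sum_insert (by decide), Finset.sum_insert (by decide), Finset.sum_insert (by decide), Finset.sum_insert (by decide), Finset.sum_insert (by decide), Finset.sum_insert (by decide), Finset.sum_insert (by decide), Finset.sum_insert (by decide), Finset.sum_insert (by decide), Finset.sum_insert (by decide), Finset.sum_insert (by decide), Finset.sum_insert (by decide), Finset.sum_insert (by decide), Finset.sum_insert (by decide), Finset.sum_insert (by decide), Finset.sum_insert (by decide), Finset.sum_insert (by decide), Finset.sum_insert (by decide), Finset.sum_singleton]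
  simp only [Equiv.Perm.mul_apply, Equiv.swap_apply_def, Equiv.Perm.one_apply]
  norm_num
  abel

private lemma rowSym42_expand (T : V → V → V → V → V → V → ℝ) (x₁ x₂ x₃ x₄ x₅ x₆ : V) :
    rowSym42 T x₁ x₂ x₃ x₄ x₅ x₆ =
      (T x₁ x₂ x₃ x₄ x₅ x₆ + T x₁ x₄ x₃ x₂ x₅ x₆) + (T x₁ x₂ x₃ x₄ x₆ x₅ + T x₁ x₄ x₃ x₂ x₆ x₅) + (T x₁ x₂ x₅ x₄ x₃ x₆ + T x₁ x₄ x₅ x₂ x₃ x₆) + (T x₁ x₂ x₅ x₄ x₆ x₃ + T x₁ x₄ x₅ x₂ x₆ x₃) + (T x₁ x₂ x₆ x₄ x₃ x₅ + T x₁ x₄ x₆ x₂ x₃ x₅) + (T x₁ x₂ x₆ x₄ x₅ x₃ + T x₁ x₄ x₆ x₂ x₅ x₃) + (T x₃ x₂ x₁ x₄ x₅ x₆ + T x₃ x₄ x₁ x₂ x₅ x₆) + (T x₃ x₂ x₁ x₄ x₆ x₅ + T x₃ x₄ x₁ x₂ x₆ x₅) + (T x₃ x₂ x₅ x₄ x₁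 x₆ + T x₃ x₄ x₅ x₂ x₁ x₆) + (T x₃ x₂ x₅ x₄ x₆ x₁ + T x₃ x₄ x₅ x₂ x₆ x₁) + (T x₃ x₂ x₆ x₄ x₁ x₅ + T x₃ x₄ x₆ x₂ x₁ x₅) + (T x₃ x₂ x₆ x₄ x₅ x₁ + T x₃ x₄ x₆ x₂ x₅ x₁) + (T x₅ x₂ x₁ x₄ x₃ x₆ + T x₅ x₄ x₁ x₂ x₃ x₆) + (T x₅ x₂ x₁ x₄ x₆ x₃ + T x₅ x₄ x₁ x₂ x₆ x₃) + (T x₅ x₂ x₃ x₄ x₁ x₆ + T x₅ x₄ x₃ x₂ x₁ x₆) + (T x₅ x₂ x₃ x₄ x₆ x₁ + T x₅ x₄ x₃ x₂ x₆ x₁) + (T x₅ x₂ x₆ x₄ x₁ x₃ + T x₅ x₄ x₆ x₂ x₁ x₃) + (T x₅ x₂ x₆ x₄ x₃ x₁ + T x₅ x₄ x₆ x₂ x₃ x₁) + (T x₆ x₂ x₁ x₄ x₃ x₅ + T x₆ x₄ x₁ x₂ x₃ x₅) + (T x₆ x₂ x₁ x₄ x₅ x₃ + T x₆ x₄ x₁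 x₂ x₅ x₃) + (T x₆ x₂ x₃ x₄ x₁ x₅ + T x₆ x₄ x₃ x₂ x₁ x₅) + (T x₆ x₂ x₃ x₄ x₅ x₁ + T x₆ x₄ x₃ x₂ x₅ x₁) + (T x₆ x₂ x₅ x₄ x₁ x₃ + T x₆ x₄ x₅ x₂ x₁ x₃) + (T x₆ x₂ x₅ x₄ x₃ x₁ + T x₆ x₄ x₅ x₂ x₃ x₁) := by
  rw [rowSym42, sum_perm_fin4 (fun p q r s =>
    T (![x₁, x₃, x₅, x₆] p) x₂ (![x₁, x₃, x₅, x₆] q) x₄ (![x₁, x₃, x₅, x₆] r) (![x₁, x₃, x₅, x₆] s)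
    + T (![x₁, x₃, x₅, x₆] p) x₄ (![x₁, x₃, x₅, x₆] q) x₂ (![x₁, x₃, x₅, x₆] r) (![x₁, x₃, x₅, x₆] s))]
  simp only [Matrix.cons_val_zero, Matrix.cons_val_one, Matrix.head_cons, Matrix.cons_val_two,
    Matrix.cons_val_three, Matrix.tail_cons, Matrix.head_fin_const]


/-- `Q(a;b,c,d) = ∑ᵢ (R_{eᵢ,a}·R)(eᵢ,b,c,d)`. -/
private noncomputable def Qt (a b c d : V) : ℝ :=
  ∑ i, act4 (curvEnd e R (e i) a) (toFun4 R) (e i) b c d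

private noncomputable def PPB (a b c d : V) : ℝ :=
  ∑ i, ∑ j, R (e i) a b (e j) * R (e i) (e j) c d

private noncomputable def PPC (a b c d : V) : ℝ :=
  ∑ i, ∑ j, R (e i) a b (e j) * R (e i) c (e j) d

private noncomputable def PPD (a b c d : V) : ℝ :=
  ∑ i, ∑ j, R (e i) a b (e j) * R (e i) c d (e j)

private lemma curv_anti2 {R : Curv V} (h : IsCurv R) (x y z w : V) :
    R x y z w = - R x y w z := by
  linear_combination (h.2.1 x y z w) + (h.1 z w x y) - (h.2.1 w z x y)

private lemma curv_swap (h : IsCurv R) (x y z w : V) : R x y z w = R y x w z := by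
  linear_combination (h.1 x y z w) - (curv_anti2 h y x z w)

private lemma curv_cross (h : IsCurv R) (u a y : V) : R u a u y = R a u y u := by
  linear_combination (h.1 u a u y) - (curv_anti2 h a u u y)

private lemma curv_diag1 {R : Curv V} (h : IsCurv R) (x z w : V) : R x x z w = 0 := by
  have := h.1 x x z w; linarith

private lemma curv_diag2 {R : Curv V} (h : IsCurv R) (x y z : V) : R x y z z = 0 := by
  have := curv_anti2 h x y z z; linarith

private lemma sum_repr_mul (S : Curv V) (a b c d : V) :
    ∑ j, ⟪e j, a⟫ * S (e j) b c d = S a b c d := by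
  conv_rhs => rw [← OrthonormalBasis.sum_repr' e a]
  rw [map_sum]
  rw [LinearMap.sum_apply, LinearMap.sum_apply, LinearMap.sum_apply]
  refine Finset.sum_congr rfl fun j _ => ?_
  rw [map_smul]
  simp [smul_eq_mul]

private lemma curvEnd_app1 (S : Curv V) (u v x y z w : V) :
    S (curvEnd e R u v x) y z w = ∑ j, R u v x (e j) * S (e j) y z w := by
  rw [curvEnd, map_sum, LinearMap.sum_apply, LinearMap.sum_apply, LinearMap.sum_apply]
  refine Finset.sum_congr rfl fun j _ => ?_
  rw [map_smul]; simp [smul_eq_mul]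

private lemma curvEnd_app2 (S : Curv V) (u v x y z w : V) :
    S y (curvEnd e R u v x) z w = ∑ j, R u v x (e j) * S y (e j) z w := by
  rw [curvEnd, map_sum, LinearMap.sum_apply, LinearMap.sum_apply]
  refine Finset.sum_congr rfl fun j _ => ?_
  rw [map_smul]; simp [smul_eq_mul]

private lemma curvEnd_app3 (S : Curv V) (u v x y z w : V) :
    S y z (curvEnd e R u v x) w = ∑ j, R u v x (e j) * S y z (e j) w := by
  rw [curvEnd, map_sum, LinearMap.sum_apply]
  refine Finset.sum_congr rfl fun j _ => ?_
  rw [map_smul]; simp [smul_eq_mul]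

private lemma curvEnd_app4 (S : Curv V) (u v x y z w : V) :
    S y z w (curvEnd e R u v x) = ∑ j, R u v x (e j) * S y z w (e j) := by
  rw [curvEnd, map_sum]
  refine Finset.sum_congr rfl fun j _ => ?_
  rw [map_smul]; simp [smul_eq_mul]

private lemma act4_curvEnd (u v x y z w : V) :
    act4 (curvEnd e R u v) (toFun4 R) x y z w =
      -(∑ j, R u v x (e j) * R (e j) y z w) - (∑ j, R u v y (e j) * R x (e j) z w)
        - (∑ j, R u v z (e j) * R x y (e j) w) - (∑ j, R u v w (e j) * R x y z (e j)) := by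
  simp only [act4, toFun4]
  rw [curvEnd_app1 e R, curvEnd_app2 e R, curvEnd_app3 e R, curvEnd_app4 e R]
  ring

private lemma act4_anti1 (hR : IsCurv R) (B : V → V) (x y z w : V) :
    act4 B (toFun4 R) x y z w = - act4 B (toFun4 R) y x z w := by
  simp only [act4, toFun4]
  linear_combination - hR.1 (B x) y z w - hR.1 (B y) x z w - hR.1 x y (B z) w - hR.1 x y z (B w)

private lemma act4_anti2 (hR : IsCurv R) (B : V → V) (x y z w : V) :
    act4 B (toFun4 R) x y z w = - act4 B (toFun4 R) x y w z := by
  simp only [act4, toFun4]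
  linear_combination - curv_anti2 hR (B x) y z w - curv_anti2 hR x (B y) z w
    - curv_anti2 hR x y (B z) w - curv_anti2 hR x y z (B w)

private lemma act4_pair (hR : IsCurv R) (B : V → V) (x y z w : V) :
    act4 B (toFun4 R) x y z w = act4 B (toFun4 R) z w x y := by
  simp only [act4, toFun4]
  linear_combination - hR.2.1 (B x) y z w - hR.2.1 x (B y) z w + hR.2.1 (B z) w x y
    + hR.2.1 z (B w) x y

private lemma act4_swap (hR : IsCurv R) (B : V → V) (x y z w : V) :
    act4 B (toFun4 R) x y z w = act4 B (toFun4 R) y x w z := by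
  rw [act4_anti1 R hR B x y z w, act4_anti2 R hR B y x z w, neg_neg]

private lemma act4_bianchi (hR : IsCurv R) (B : V → V) (x y z w : V) :
    act4 B (toFun4 R) x y z w + act4 B (toFun4 R) y z x w + act4 B (toFun4 R) z x y w = 0 := by
  simp only [act4, toFun4]
  linear_combination - hR.2.2 (B x) y z w - hR.2.2 x (B y) z w - hR.2.2 x y (B z) w
    - hR.2.2 x y z (B w)

private lemma curvEnd_swap (hR : IsCurv R) (u v x : V) :
    curvEnd e R u v x = - curvEnd e R v u x := by
  rw [curvEnd, curvEnd, ← Finset.sum_neg_distrib]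
  exact Finset.sum_congr rfl fun i _ => by rw [hR.1 u v x (e i), neg_smul]

private lemma act4_negswap (hR : IsCurv R) (u v x y z w : V) :
    act4 (curvEnd e R u v) (toFun4 R) x y z w
      = - act4 (curvEnd e R v u) (toFun4 R) x y z w := by
  simp only [act4, toFun4, curvEnd_swap e R hR u v]
  simp only [map_neg, LinearMap.neg_apply]
  have hneg : ∀ a : V, R (-a) y z w = -(R a y z w) := fun a => by
    rw [← neg_one_smul ℝ a, map_smul, LinearMap.smul_apply, LinearMap.smul_apply,
      LinearMap.smul_apply, neg_one_smul]
  rw [hneg]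
  ring

private lemma Qt_bianchi (hR : IsCurv R) (a y z w : V) :
    Qt e R a y z w = Qt e R a z y w - Qt e R a w y z := by
  rw [Qt, Qt, Qt, ← Finset.sum_sub_distrib]
  refine Finset.sum_congr rfl fun i _ => ?_
  linear_combination act4_bianchi R hR (curvEnd e R (e i) a) (e i) y z w
    - act4_pair R hR (curvEnd e R (e i) a) y z (e i) w
    - act4_anti1 R hR (curvEnd e R (e i) a) z (e i) y w

private lemma RstarR_eq (hR : IsCurv R) (x₁ x₂ x₃ x₄ : V) :
    RstarR e R x₁ x₂ x₃ x₄ = Qt e R x₁ x₂ x₃ x₄ + Qt e R x₂ x₁ x₄ x₃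
      + Qt e R x₃ x₄ x₁ x₂ + Qt e R x₄ x₃ x₂ x₁ := by
  rw [RstarR, star4, Qt, Qt, Qt, Qt]
  have g1 : ∀ j, act4 (curvEnd e R x₁ (e j)) (toFun4 R) (e j) x₂ x₃ x₄
      = -(act4 (curvEnd e R (e j) x₁) (toFun4 R) (e j) x₂ x₃ x₄) := fun j =>
    act4_negswap e R hR x₁ (e j) (e j) x₂ x₃ x₄
  have g2 : ∀ j, act4 (curvEnd e R x₂ (e j)) (toFun4 R) x₁ (e j) x₃ x₄
      = -(act4 (curvEnd e R (e j) x₂) (toFun4 R) (e j) x₁ x₄ x₃) := fun j => by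
    rw [act4_swap R hR (curvEnd e R x₂ (e j)) x₁ (e j) x₃ x₄]
    exact act4_negswap e R hR x₂ (e j) (e j) x₁ x₄ x₃
  have g3 : ∀ j, act4 (curvEnd e R x₃ (e j)) (toFun4 R) x₁ x₂ (e j) x₄
      = -(act4 (curvEnd e R (e j) x₃) (toFun4 R) (e j) x₄ x₁ x₂) := fun j => by
    rw [act4_pair R hR (curvEnd e R x₃ (e j)) x₁ x₂ (e j) x₄]
    exact act4_negswap e R hR x₃ (e j) (e j) x₄ x₁ x₂
  have g4 : ∀ j, act4 (curvEnd e R x₄ (e j)) (toFun4 R) x₁ x₂ x₃ (e j)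
      = -(act4 (curvEnd e R (e j) x₄) (toFun4 R) (e j) x₃ x₂ x₁) := fun j => by
    rw [act4_pair R hR (curvEnd e R x₄ (e j)) x₁ x₂ x₃ (e j),
      act4_swap R hR (curvEnd e R x₄ (e j)) x₃ (e j) x₁ x₂]
    exact act4_negswap e R hR x₄ (e j) (e j) x₃ x₂ x₁
  simp only [g1, g2, g3, g4, Finset.sum_neg_distrib]
  ring

private lemma Qt_eq (hR : IsCurv R) (c₀ : ℝ) (hc : ∀ x y, ric e R x y = c₀ * ⟪x, y⟫)
    (a b c d : V) :
    Qt e R a b c d = c₀ * R a b c d - PPB e R a b c d - PPC e R a c b d - PPD e R a d b c := by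
  rw [Qt, PPB, PPC, PPD]
  simp only [act4_curvEnd e R]
  rw [Finset.sum_sub_distrib, Finset.sum_sub_distrib, Finset.sum_sub_distrib,
    Finset.sum_neg_distrib]
  have h1 : ∑ i, ∑ j, R (e i) a (e i) (e j) * R (e j) b c d = -(c₀ * R a b c d) := by
    rw [Finset.sum_comm]
    have hj : ∀ j : Fin n, ∑ i, R (e i) a (e i) (e j) * R (e j) b c d
        = -(c₀ * (⟪e j, a⟫ * R (e j) b c d)) := by
      intro j
      rw [← Finset.sum_mul]
      have hr : ∑ i, R (e i) a (e i) (e j) = ∑ i, R a (e i) (e j) (e i) :=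
        Finset.sum_congr rfl fun i _ => curv_cross R hR (e i) a (e j)
      have hric := hc a (e j)
      simp only [ric] at hric
      rw [real_inner_comm (e j) a] at hric
      rw [hr]
      have h9 : ∑ i, R a (e i) (e j) (e i) = -(c₀ * ⟪e j, a⟫) := by linarith
      rw [h9]; ring
    rw [Finset.sum_congr rfl fun j _ => hj j, Finset.sum_neg_distrib, ← Finset.mul_sum,
      sum_repr_mul e R a b c d]
  rw [h1]
  ring


private lemma t24
    (hc2 : ∀ x y, IsCurv (D2 x y))
    (hB2 : ∀ x y z w u v, D2 x y z w u v + D2 x z w y u v + D2 x w y z u v = 0)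
    (hRI : ∀ x y z₁ z₂ z₃ z₄, D2 x y z₁ z₂ z₃ z₄ - D2 y x z₁ z₂ z₃ z₄ =
      act4 (curvEnd e R x y) (toFun4 R) z₁ z₂ z₃ z₄)
    (h2 : ∀ x y z w, nabla2Ric e D2 x y z w = 0) (u v b d : V) :
    ∑ i, D2 u v b (e i) d (e i) = 0 := by
  have h := h2 u v b d
  simp only [nabla2Ric] at h
  linarith

private lemma t13
    (hc2 : ∀ x y, IsCurv (D2 x y))
    (hB2 : ∀ x y z w u v, D2 x y z w u v + D2 x z w y u v + D2 x w y z u v = 0)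
    (hRI : ∀ x y z₁ z₂ z₃ z₄, D2 x y z₁ z₂ z₃ z₄ - D2 y x z₁ z₂ z₃ z₄ =
      act4 (curvEnd e R x y) (toFun4 R) z₁ z₂ z₃ z₄)
    (h2 : ∀ x y z w, nabla2Ric e D2 x y z w = 0) (u v b d : V) :
    ∑ i, D2 u v (e i) b (e i) d = 0 := by
  rw [Finset.sum_congr rfl fun i _ => curv_cross (D2 u v) (hc2 u v) (e i) b d]
  exact t24 e R D2 hc2 hB2 hRI h2 u v b d

private lemma t14
    (hc2 : ∀ x y, IsCurv (D2 x y))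
    (hB2 : ∀ x y z w u v, D2 x y z w u v + D2 x z w y u v + D2 x w y z u v = 0)
    (hRI : ∀ x y z₁ z₂ z₃ z₄, D2 x y z₁ z₂ z₃ z₄ - D2 y x z₁ z₂ z₃ z₄ =
      act4 (curvEnd e R x y) (toFun4 R) z₁ z₂ z₃ z₄)
    (h2 : ∀ x y z w, nabla2Ric e D2 x y z w = 0) (u v b d : V) :
    ∑ i, D2 u v (e i) b d (e i) = 0 := by
  rw [Finset.sum_congr rfl fun i _ => (hc2 u v).1 (e i) b d (e i), Finset.sum_neg_distrib,
    t24 e R D2 hc2 hB2 hRI h2 u v b d, neg_zero]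

private lemma t23
    (hc2 : ∀ x y, IsCurv (D2 x y))
    (hB2 : ∀ x y z w u v, D2 x y z w u v + D2 x z w y u v + D2 x w y z u v = 0)
    (hRI : ∀ x y z₁ z₂ z₃ z₄, D2 x y z₁ z₂ z₃ z₄ - D2 y x z₁ z₂ z₃ z₄ =
      act4 (curvEnd e R x y) (toFun4 R) z₁ z₂ z₃ z₄)
    (h2 : ∀ x y z w, nabla2Ric e D2 x y z w = 0) (u v b d : V) :
    ∑ i, D2 u v b (e i) (e i) d = 0 := by
  rw [Finset.sum_congr rfl fun i _ => curv_anti2 (hc2 u v) b (e i) (e i) d,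
    Finset.sum_neg_distrib, t24 e R D2 hc2 hB2 hRI h2 u v b d, neg_zero]

private lemma t12
    (hc2 : ∀ x y, IsCurv (D2 x y))
    (hB2 : ∀ x y z w u v, D2 x y z w u v + D2 x z w y u v + D2 x w y z u v = 0)
    (hRI : ∀ x y z₁ z₂ z₃ z₄, D2 x y z₁ z₂ z₃ z₄ - D2 y x z₁ z₂ z₃ z₄ =
      act4 (curvEnd e R x y) (toFun4 R) z₁ z₂ z₃ z₄)
    (h2 : ∀ x y z w, nabla2Ric e D2 x y z w = 0) (u v z w : V) :
    ∑ i, D2 u v (e i) (e i) z w = 0 :=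
  Finset.sum_eq_zero fun i _ => curv_diag1 (hc2 u v) (e i) z w

private lemma t34
    (hc2 : ∀ x y, IsCurv (D2 x y))
    (hB2 : ∀ x y z w u v, D2 x y z w u v + D2 x z w y u v + D2 x w y z u v = 0)
    (hRI : ∀ x y z₁ z₂ z₃ z₄, D2 x y z₁ z₂ z₃ z₄ - D2 y x z₁ z₂ z₃ z₄ =
      act4 (curvEnd e R x y) (toFun4 R) z₁ z₂ z₃ z₄)
    (h2 : ∀ x y z w, nabla2Ric e D2 x y z w = 0) (u v z w : V) :
    ∑ i, D2 u v z w (e i) (e i) = 0 := by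
  refine Finset.sum_eq_zero fun i _ => ?_
  have h := curv_anti2 (hc2 u v) z w (e i) (e i)
  linarith

private lemma tN1
    (hc2 : ∀ x y, IsCurv (D2 x y))
    (hB2 : ∀ x y z w u v, D2 x y z w u v + D2 x z w y u v + D2 x w y z u v = 0)
    (hRI : ∀ x y z₁ z₂ z₃ z₄, D2 x y z₁ z₂ z₃ z₄ - D2 y x z₁ z₂ z₃ z₄ =
      act4 (curvEnd e R x y) (toFun4 R) z₁ z₂ z₃ z₄)
    (h2 : ∀ x y z w, nabla2Ric e D2 x y z w = 0) (x z w v : V) :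
    ∑ i, D2 x (e i) z w (e i) v = 0 := by
  have h1 : ∑ i, (D2 x (e i) z w (e i) v + D2 x z w (e i) (e i) v + D2 x w (e i) z (e i) v)
      = 0 := Finset.sum_eq_zero fun i _ => hB2 x (e i) z w (e i) v
  rw [Finset.sum_add_distrib, Finset.sum_add_distrib] at h1
  rw [t23 e R D2 hc2 hB2 hRI h2 x z w v, t13 e R D2 hc2 hB2 hRI h2 x w z v] at h1
  linarith

private lemma tN3
    (hc2 : ∀ x y, IsCurv (D2 x y))
    (hB2 : ∀ x y z w u v, D2 x y z w u v + D2 x z w y u v + D2 x w y z u v = 0)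
    (hRI : ∀ x y z₁ z₂ z₃ z₄, D2 x y z₁ z₂ z₃ z₄ - D2 y x z₁ z₂ z₃ z₄ =
      act4 (curvEnd e R x y) (toFun4 R) z₁ z₂ z₃ z₄)
    (h2 : ∀ x y z w, nabla2Ric e D2 x y z w = 0) (x y z w : V) :
    ∑ i, D2 x (e i) (e i) y z w = 0 := by
  rw [Finset.sum_congr rfl fun i _ => (hc2 x (e i)).2.1 (e i) y z w]
  exact tN1 e R D2 hc2 hB2 hRI h2 x z w y

private lemma tN2
    (hc2 : ∀ x y, IsCurv (D2 x y))
    (hB2 : ∀ x y z w u v, D2 x y z w u v + D2 x z w y u v + D2 x w y z u v = 0)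
    (hRI : ∀ x y z₁ z₂ z₃ z₄, D2 x y z₁ z₂ z₃ z₄ - D2 y x z₁ z₂ z₃ z₄ =
      act4 (curvEnd e R x y) (toFun4 R) z₁ z₂ z₃ z₄)
    (h2 : ∀ x y z w, nabla2Ric e D2 x y z w = 0) (x z w v : V) :
    ∑ i, D2 x (e i) z w v (e i) = 0 := by
  rw [Finset.sum_congr rfl fun i _ => curv_anti2 (hc2 x (e i)) z w v (e i),
    Finset.sum_neg_distrib, tN1 e R D2 hc2 hB2 hRI h2 x z w v, neg_zero]

private lemma tN4
    (hc2 : ∀ x y, IsCurv (D2 x y))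
    (hB2 : ∀ x y z w u v, D2 x y z w u v + D2 x z w y u v + D2 x w y z u v = 0)
    (hRI : ∀ x y z₁ z₂ z₃ z₄, D2 x y z₁ z₂ z₃ z₄ - D2 y x z₁ z₂ z₃ z₄ =
      act4 (curvEnd e R x y) (toFun4 R) z₁ z₂ z₃ z₄)
    (h2 : ∀ x y z w, nabla2Ric e D2 x y z w = 0) (x y z w : V) :
    ∑ i, D2 x (e i) y (e i) z w = 0 := by
  rw [Finset.sum_congr rfl fun i _ => (hc2 x (e i)).1 y (e i) z w,
    Finset.sum_neg_distrib, tN3 e R D2 hc2 hB2 hRI h2 x y z w, neg_zero]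

private lemma tQ1
    (hc2 : ∀ x y, IsCurv (D2 x y))
    (hB2 : ∀ x y z w u v, D2 x y z w u v + D2 x z w y u v + D2 x w y z u v = 0)
    (hRI : ∀ x y z₁ z₂ z₃ z₄, D2 x y z₁ z₂ z₃ z₄ - D2 y x z₁ z₂ z₃ z₄ =
      act4 (curvEnd e R x y) (toFun4 R) z₁ z₂ z₃ z₄)
    (h2 : ∀ x y z w, nabla2Ric e D2 x y z w = 0) (u y z w : V) :
    ∑ i, D2 (e i) u (e i) y z w = Qt e R u y z w := by
  have key : ∀ i, D2 (e i) u (e i) y z w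
      = D2 u (e i) (e i) y z w + act4 (curvEnd e R (e i) u) (toFun4 R) (e i) y z w := by
    intro i
    have h := hRI (e i) u (e i) y z w
    linarith
  rw [Finset.sum_congr rfl fun i _ => key i, Finset.sum_add_distrib,
    tN3 e R D2 hc2 hB2 hRI h2 u y z w, zero_add]
  rfl

private lemma tQ2
    (hc2 : ∀ x y, IsCurv (D2 x y))
    (hB2 : ∀ x y z w u v, D2 x y z w u v + D2 x z w y u v + D2 x w y z u v = 0)
    (hRI : ∀ x y z₁ z₂ z₃ z₄, D2 x y z₁ z₂ z₃ z₄ - D2 y x z₁ z₂ z₃ z₄ =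
      act4 (curvEnd e R x y) (toFun4 R) z₁ z₂ z₃ z₄)
    (h2 : ∀ x y z w, nabla2Ric e D2 x y z w = 0) (u y z w : V) :
    ∑ i, D2 (e i) u y (e i) z w = -(Qt e R u y z w) := by
  rw [Finset.sum_congr rfl fun i _ => (hc2 (e i) u).1 y (e i) z w,
    Finset.sum_neg_distrib, tQ1 e R D2 hc2 hB2 hRI h2 u y z w]

private lemma tQ3
    (hc2 : ∀ x y, IsCurv (D2 x y))
    (hB2 : ∀ x y z w u v, D2 x y z w u v + D2 x z w y u v + D2 x w y z u v = 0)
    (hRI : ∀ x y z₁ z₂ z₃ z₄, D2 x y z₁ z₂ z₃ z₄ - D2 y x z₁ z₂ z₃ z₄ =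
      act4 (curvEnd e R x y) (toFun4 R) z₁ z₂ z₃ z₄)
    (h2 : ∀ x y z w, nabla2Ric e D2 x y z w = 0) (u y z w : V) :
    ∑ i, D2 (e i) u z w (e i) y = Qt e R u y z w := by
  rw [Finset.sum_congr rfl fun i _ => (hc2 (e i) u).2.1 z w (e i) y]
  exact tQ1 e R D2 hc2 hB2 hRI h2 u y z w

private lemma tQ4
    (hc2 : ∀ x y, IsCurv (D2 x y))
    (hB2 : ∀ x y z w u v, D2 x y z w u v + D2 x z w y u v + D2 x w y z u v = 0)
    (hRI : ∀ x y z₁ z₂ z₃ z₄, D2 x y z₁ z₂ z₃ z₄ - D2 y x z₁ z₂ z₃ z₄ =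
      act4 (curvEnd e R x y) (toFun4 R) z₁ z₂ z₃ z₄)
    (h2 : ∀ x y z w, nabla2Ric e D2 x y z w = 0) (u y z w : V) :
    ∑ i, D2 (e i) u z w y (e i) = -(Qt e R u y z w) := by
  rw [Finset.sum_congr rfl fun i _ => curv_anti2 (hc2 (e i) u) z w y (e i),
    Finset.sum_neg_distrib, tQ3 e R D2 hc2 hB2 hRI h2 u y z w]

private lemma tL
    (hc2 : ∀ x y, IsCurv (D2 x y))
    (hB2 : ∀ x y z w u v, D2 x y z w u v + D2 x z w y u v + D2 x w y z u v = 0)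
    (hRI : ∀ x y z₁ z₂ z₃ z₄, D2 x y z₁ z₂ z₃ z₄ - D2 y x z₁ z₂ z₃ z₄ =
      act4 (curvEnd e R x y) (toFun4 R) z₁ z₂ z₃ z₄)
    (h2 : ∀ x y z w, nabla2Ric e D2 x y z w = 0) (z w u v : V) :
    ∑ i, D2 (e i) (e i) z w u v = Qt e R z w u v - Qt e R w z u v := by
  have h1 : ∑ i, (D2 (e i) (e i) z w u v + D2 (e i) z w (e i) u v + D2 (e i) w (e i) z u v)
      = 0 := Finset.sum_eq_zero fun i _ => hB2 (e i) (e i) z w u v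
  rw [Finset.sum_add_distrib, Finset.sum_add_distrib] at h1
  have hs2 : ∑ i, D2 (e i) z w (e i) u v = -(Qt e R z w u v) := by
    rw [Finset.sum_congr rfl fun i _ => (hc2 (e i) z).1 w (e i) u v,
      Finset.sum_neg_distrib, tQ1 e R D2 hc2 hB2 hRI h2 z w u v]
  have hs3 := tQ1 e R D2 hc2 hB2 hRI h2 w z u v
  linarith


set_option maxHeartbeats 1000000 in
private lemma piece1 (hR : IsCurv R)
    (hc2 : ∀ x y, IsCurv (D2 x y))
    (hB2 : ∀ x y z w u v, D2 x y z w u v + D2 x z w y u v + D2 x w y z u v = 0)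
    (hRI : ∀ x y z₁ z₂ z₃ z₄, D2 x y z₁ z₂ z₃ z₄ - D2 y x z₁ z₂ z₃ z₄ =
      act4 (curvEnd e R x y) (toFun4 R) z₁ z₂ z₃ z₄)
    (h2 : ∀ x y z w, nabla2Ric e D2 x y z w = 0) (x₂ x₄ x₅ x₆ : V) :
    ∑ i, rowSym42 (fun z₁ z₂ z₃ z₄ z₅ z₆ => D2 z₅ z₆ z₁ z₂ z₃ z₄) (e i) x₂ (e i) x₄ x₅ x₆ =
      6 * Qt e R x₆ x₂ x₅ x₄ + 6 * Qt e R x₆ x₄ x₅ x₂ + 6 * Qt e R x₅ x₂ x₆ x₄ + 6 * Qt e R x₅ x₄ x₆ x₂ + (-2) * Qt e R x₂ x₅ x₆ x₄ + (-2) * Qt e R x₄ x₅ x₆ x₂ + (-2) * Qt e R x₂ x₆ x₅ x₄ + (-2) * Qt e R x₄ x₆ x₅ x₂ := by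
  simp only [rowSym42_expand]
  simp only [Finset.sum_add_distrib]
  linarith [t13 e R D2 hc2 hB2 hRI h2 x₅ x₆ x₂ x₄, t13 e R D2 hc2 hB2 hRI h2 x₅ x₆ x₄ x₂, t13 e R D2 hc2 hB2 hRI h2 x₆ x₅ x₂ x₄, t13 e R D2 hc2 hB2 hRI h2 x₆ x₅ x₄ x₂, tQ1 e R D2 hc2 hB2 hRI h2 x₆ x₂ x₅ x₄, tQ1 e R D2 hc2 hB2 hRI h2 x₆ x₄ x₅ x₂, tN3 e R D2 hc2 hB2 hRI h2 x₆ x₂ x₅ x₄, tN3 e R D2 hc2 hB2 hRI h2 x₆ x₄ x₅ x₂, tQ1 e R D2 hc2 hB2 hRI h2 x₅ x₂ x₆ x₄, tQ1 e R D2 hc2 hB2 hRI h2 x₅ x₄ x₆ x₂, tN3 e R D2 hc2 hB2 hRI h2 x₅ x₂ x₆ x₄, tN3 e R D2 hc2 hB2 hRI h2 x₅ x₄ x₆ x₂, tQ3 e R D2 hc2 hB2 hRI h2 x₆ x₄ x₅ x₂, tQ3 e R D2 hc2 hB2 hRI h2 x₆ x₂ x₅ x₄, tN1 e R D2 hc2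 hB2 hRI h2 x₆ x₅ x₂ x₄, tN1 e R D2 hc2 hB2 hRI h2 x₆ x₅ x₄ x₂, tL e R D2 hc2 hB2 hRI h2 x₅ x₂ x₆ x₄, tL e R D2 hc2 hB2 hRI h2 x₅ x₄ x₆ x₂, tQ3 e R D2 hc2 hB2 hRI h2 x₅ x₄ x₆ x₂, tQ3 e R D2 hc2 hB2 hRI h2 x₅ x₂ x₆ x₄, tN1 e R D2 hc2 hB2 hRI h2 x₅ x₆ x₂ x₄, tN1 e R D2 hc2 hB2 hRI h2 x₅ x₆ x₄ x₂, tL e R D2 hc2 hB2 hRI h2 x₆ x₂ x₅ x₄, tL e R D2 hc2 hB2 hRI h2 x₆ x₄ x₅ x₂]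

set_option maxHeartbeats 1000000 in
private lemma piece2 (hR : IsCurv R)
    (hc2 : ∀ x y, IsCurv (D2 x y))
    (hB2 : ∀ x y z w u v, D2 x y z w u v + D2 x z w y u v + D2 x w y z u v = 0)
    (hRI : ∀ x y z₁ z₂ z₃ z₄, D2 x y z₁ z₂ z₃ z₄ - D2 y x z₁ z₂ z₃ z₄ =
      act4 (curvEnd e R x y) (toFun4 R) z₁ z₂ z₃ z₄)
    (h2 : ∀ x y z w, nabla2Ric e D2 x y z w = 0) (x₂ x₄ x₅ x₆ : V) :
    ∑ i, rowSym42 (fun z₁ z₂ z₃ z₄ z₅ z₆ => D2 z₅ z₆ z₁ z₂ z₃ z₄) x₂ (e i) (e i) x₄ x₅ x₆ =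
      (-2) * Qt e R x₆ x₂ x₅ x₄ + (-2) * Qt e R x₆ x₅ x₂ x₄ + (-2) * Qt e R x₅ x₂ x₆ x₄ + (-2) * Qt e R x₅ x₆ x₂ x₄ + (-2) * Qt e R x₂ x₅ x₆ x₄ + (-2) * Qt e R x₂ x₆ x₅ x₄ := by
  simp only [rowSym42_expand]
  simp only [Finset.sum_add_distrib]
  linarith [t23 e R D2 hc2 hB2 hRI h2 x₅ x₆ x₂ x₄, t34 e R D2 hc2 hB2 hRI h2 x₅ x₆ x₂ x₄, t23 e R D2 hc2 hB2 hRI h2 x₆ x₅ x₂ x₄, t34 e R D2 hc2 hB2 hRI h2 x₆ x₅ x₂ x₄, tQ2 e R D2 hc2 hB2 hRI h2 x₆ x₂ x₅ x₄, tQ4 e R D2 hc2 hB2 hRI h2 x₆ x₅ x₂ x₄, tN4 e R D2 hc2 hB2 hRI h2 x₆ x₂ x₅ x₄, tN2 e R D2 hc2 hB2 hRI h2 x₆ x₂ x₄ x₅, tQ2 e R D2 hc2 hB2 hRI h2 x₅ x₂ x₆ x₄, tQ4 e R D2 hc2 hB2 hRI h2 x₅ x₆ x₂ x₄, tN4 e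 R D2 hc2 hB2 hRI h2 x₅ x₂ x₆ x₄, tN2 e R D2 hc2 hB2 hRI h2 x₅ x₂ x₄ x₆, t12 e R D2 hc2 hB2 hRI h2 x₅ x₆ x₂ x₄, t14 e R D2 hc2 hB2 hRI h2 x₅ x₆ x₄ x₂, t12 e R D2 hc2 hB2 hRI h2 x₆ x₅ x₂ x₄, t14 e R D2 hc2 hB2 hRI h2 x₆ x₅ x₄ x₂, t12 e R D2 hc2 hB2 hRI h2 x₂ x₆ x₅ x₄, t14 e R D2 hc2 hB2 hRI h2 x₂ x₆ x₄ x₅, t12 e R D2 hc2 hB2 hRI h2 x₆ x₂ x₅ x₄, t14 e R D2 hc2 hB2 hRI h2 x₆ x₂ x₄ x₅, t12 e R D2 hc2 hB2 hRI h2 x₂ x₅ x₆ x₄, t14 e R D2 hc2 hB2 hRI h2 x₂ x₅ x₄ x₆, t12 e R D2 hc2 hB2 hRI h2 x₅ x₂ x₆ x₄, t14 e R D2 hc2 hB2 hRI h2 x₅ x₂ x₄ x₆, tQ2 e R D2 hc2 hB2 hRI h2 x₆ x₅ x₂ x₄, tQ4 e R D2 hc2 hB2 hRI h2 x₆ x₂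 x₅ x₄, tN4 e R D2 hc2 hB2 hRI h2 x₆ x₅ x₂ x₄, tN2 e R D2 hc2 hB2 hRI h2 x₆ x₅ x₄ x₂, t23 e R D2 hc2 hB2 hRI h2 x₂ x₆ x₅ x₄, t34 e R D2 hc2 hB2 hRI h2 x₂ x₆ x₅ x₄, t23 e R D2 hc2 hB2 hRI h2 x₆ x₂ x₅ x₄, t34 e R D2 hc2 hB2 hRI h2 x₆ x₂ x₅ x₄, tN4 e R D2 hc2 hB2 hRI h2 x₂ x₅ x₆ x₄, tN2 e R D2 hc2 hB2 hRI h2 x₂ x₅ x₄ x₆, tQ2 e R D2 hc2 hB2 hRI h2 x₂ x₅ x₆ x₄, tQ4 e R D2 hc2 hB2 hRI h2 x₂ x₆ x₅ x₄, tQ2 e R D2 hc2 hB2 hRI h2 x₅ x₆ x₂ x₄, tQ4 e R D2 hc2 hB2 hRI h2 x₅ x₂ x₆ x₄, tN4 e R D2 hc2 hB2 hRI h2 x₅ x₆ x₂ x₄, tN2 e R D2 hc2 hB2 hRI h2 x₅ x₆ x₄ x₂, t23 e R D2 hc2 hB2 hRI h2 x₂ x₅ x₆ x₄, t34 e R D2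 hc2 hB2 hRI h2 x₂ x₅ x₆ x₄, t23 e R D2 hc2 hB2 hRI h2 x₅ x₂ x₆ x₄, t34 e R D2 hc2 hB2 hRI h2 x₅ x₂ x₆ x₄, tN4 e R D2 hc2 hB2 hRI h2 x₂ x₆ x₅ x₄, tN2 e R D2 hc2 hB2 hRI h2 x₂ x₆ x₄ x₅, tQ2 e R D2 hc2 hB2 hRI h2 x₂ x₆ x₅ x₄, tQ4 e R D2 hc2 hB2 hRI h2 x₂ x₅ x₆ x₄]

set_option maxHeartbeats 1000000 in
private lemma piece3 (hR : IsCurv R)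
    (hc2 : ∀ x y, IsCurv (D2 x y))
    (hB2 : ∀ x y z w u v, D2 x y z w u v + D2 x z w y u v + D2 x w y z u v = 0)
    (hRI : ∀ x y z₁ z₂ z₃ z₄, D2 x y z₁ z₂ z₃ z₄ - D2 y x z₁ z₂ z₃ z₄ =
      act4 (curvEnd e R x y) (toFun4 R) z₁ z₂ z₃ z₄)
    (h2 : ∀ x y z w, nabla2Ric e D2 x y z w = 0) (x₂ x₄ x₅ x₆ : V) :
    ∑ i, rowSym42 (fun z₁ z₂ z₃ z₄ z₅ z₆ => D2 z₅ z₆ z₁ z₂ z₃ z₄) (e i) x₂ x₄ (e i) x₅ x₆ =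
      (-2) * Qt e R x₆ x₅ x₄ x₂ + (-2) * Qt e R x₆ x₄ x₅ x₂ + (-2) * Qt e R x₅ x₆ x₄ x₂ + (-2) * Qt e R x₅ x₄ x₆ x₂ + (-2) * Qt e R x₄ x₆ x₅ x₂ + (-2) * Qt e R x₄ x₅ x₆ x₂ := by
  simp only [rowSym42_expand]
  simp only [Finset.sum_add_distrib]
  linarith [t14 e R D2 hc2 hB2 hRI h2 x₅ x₆ x₂ x₄, t12 e R D2 hc2 hB2 hRI h2 x₅ x₆ x₄ x₂, t14 e R D2 hc2 hB2 hRI h2 x₆ x₅ x₂ x₄, t12 e R D2 hc2 hB2 hRI h2 x₆ x₅ x₄ x₂, t14 e R D2 hc2 hB2 hRI h2 x₄ x₆ x₂ x₅, t12 e R D2 hc2 hB2 hRI h2 x₄ x₆ x₅ x₂, t14 e R D2 hc2 hB2 hRI h2 x₆ x₄ x₂ x₅, t12 e R D2 hc2 hB2 hRI h2 x₆ x₄ x₅ x₂, t14 e R D2 hc2 hB2 hRI h2 x₄ x₅ x₂ x₆, t12 e R D2 hc2 hB2 hRI h2 x₄ x₅ x₆ x₂, t14 e R D2 hc2 hB2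 hRI h2 x₅ x₄ x₂ x₆, t12 e R D2 hc2 hB2 hRI h2 x₅ x₄ x₆ x₂, t34 e R D2 hc2 hB2 hRI h2 x₅ x₆ x₄ x₂, t23 e R D2 hc2 hB2 hRI h2 x₅ x₆ x₄ x₂, t34 e R D2 hc2 hB2 hRI h2 x₆ x₅ x₄ x₂, t23 e R D2 hc2 hB2 hRI h2 x₆ x₅ x₄ x₂, tQ4 e R D2 hc2 hB2 hRI h2 x₆ x₅ x₄ x₂, tQ2 e R D2 hc2 hB2 hRI h2 x₆ x₄ x₅ x₂, tN2 e R D2 hc2 hB2 hRI h2 x₆ x₄ x₂ x₅, tN4 e R D2 hc2 hB2 hRI h2 x₆ x₄ x₅ x₂, tQ4 e R D2 hc2 hB2 hRI h2 x₅ x₆ x₄ x₂, tQ2 e R D2 hc2 hB2 hRI h2 x₅ x₄ x₆ x₂, tN2 e R D2 hc2 hB2 hRI h2 x₅ x₄ x₂ x₆, tN4 e R D2 hc2 hB2 hRI h2 x₅ x₄ x₆ x₂, t34 e R D2 hc2 hB2 hRI h2 x₄ x₆ x₅ x₂, t23 e R D2 hc2 hB2 hRI h2 x₄ x₆ x₅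 x₂, t34 e R D2 hc2 hB2 hRI h2 x₆ x₄ x₅ x₂, t23 e R D2 hc2 hB2 hRI h2 x₆ x₄ x₅ x₂, tQ4 e R D2 hc2 hB2 hRI h2 x₆ x₄ x₅ x₂, tQ2 e R D2 hc2 hB2 hRI h2 x₆ x₅ x₄ x₂, tN2 e R D2 hc2 hB2 hRI h2 x₆ x₅ x₂ x₄, tN4 e R D2 hc2 hB2 hRI h2 x₆ x₅ x₄ x₂, tQ4 e R D2 hc2 hB2 hRI h2 x₄ x₆ x₅ x₂, tQ2 e R D2 hc2 hB2 hRI h2 x₄ x₅ x₆ x₂, tN2 e R D2 hc2 hB2 hRI h2 x₄ x₅ x₂ x₆, tN4 e R D2 hc2 hB2 hRI h2 x₄ x₅ x₆ x₂, t34 e R D2 hc2 hB2 hRI h2 x₄ x₅ x₆ x₂, t23 e R D2 hc2 hB2 hRI h2 x₄ x₅ x₆ x₂, t34 e R D2 hc2 hB2 hRI h2 x₅ x₄ x₆ x₂, t23 e R D2 hc2 hB2 hRI h2 x₅ x₄ x₆ x₂, tQ4 e R D2 hc2 hB2 hRI h2 x₅ x₄ x₆ x₂, tQ2 e R D2 hc2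 hB2 hRI h2 x₅ x₆ x₄ x₂, tN2 e R D2 hc2 hB2 hRI h2 x₅ x₆ x₂ x₄, tN4 e R D2 hc2 hB2 hRI h2 x₅ x₆ x₄ x₂, tQ4 e R D2 hc2 hB2 hRI h2 x₄ x₅ x₆ x₂, tQ2 e R D2 hc2 hB2 hRI h2 x₄ x₆ x₅ x₂, tN2 e R D2 hc2 hB2 hRI h2 x₄ x₆ x₂ x₅, tN4 e R D2 hc2 hB2 hRI h2 x₄ x₆ x₅ x₂]

set_option maxHeartbeats 1000000 in
private lemma piece4 (hR : IsCurv R)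
    (hc2 : ∀ x y, IsCurv (D2 x y))
    (hB2 : ∀ x y z w u v, D2 x y z w u v + D2 x z w y u v + D2 x w y z u v = 0)
    (hRI : ∀ x y z₁ z₂ z₃ z₄, D2 x y z₁ z₂ z₃ z₄ - D2 y x z₁ z₂ z₃ z₄ =
      act4 (curvEnd e R x y) (toFun4 R) z₁ z₂ z₃ z₄)
    (h2 : ∀ x y z w, nabla2Ric e D2 x y z w = 0) (x₂ x₄ x₅ x₆ : V) :
    ∑ i, rowSym42 (fun z₁ z₂ z₃ z₄ z₅ z₆ => D2 z₅ z₆ z₁ z₂ z₃ z₄) x₂ (e i) x₄ (e i) x₅ x₆ =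
      0 := by
  simp only [rowSym42_expand]
  simp only [Finset.sum_add_distrib]
  linarith [t24 e R D2 hc2 hB2 hRI h2 x₅ x₆ x₂ x₄, t24 e R D2 hc2 hB2 hRI h2 x₆ x₅ x₂ x₄, t24 e R D2 hc2 hB2 hRI h2 x₄ x₆ x₂ x₅, t24 e R D2 hc2 hB2 hRI h2 x₆ x₄ x₂ x₅, t24 e R D2 hc2 hB2 hRI h2 x₄ x₅ x₂ x₆, t24 e R D2 hc2 hB2 hRI h2 x₅ x₄ x₂ x₆, t24 e R D2 hc2 hB2 hRI h2 x₅ x₆ x₄ x₂, t24 e R D2 hc2 hB2 hRI h2 x₆ x₅ x₄ x₂, t24 e R D2 hc2 hB2 hRI h2 x₂ x₆ x₄ x₅, t24 e R D2 hc2 hB2 hRI h2 x₆ x₂ x₄ x₅, t24 e R D2 hc2 hB2 hRI h2 x₂ x₅ x₄ x₆, t24 e R D2 hc2 hB2 hRI h2 x₅ x₂ x₄ x₆, t24 e R D2 hc2 hB2 hRI h2 x₄ x₆ x₅ x₂, t24 e R D2 hc2 hB2 hRI h2 x₆ x₄ x₅ x₂, t24 e R D2 hc2 hB2 hRI h2 x₂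 x₆ x₅ x₄, t24 e R D2 hc2 hB2 hRI h2 x₆ x₂ x₅ x₄, t24 e R D2 hc2 hB2 hRI h2 x₂ x₄ x₅ x₆, t24 e R D2 hc2 hB2 hRI h2 x₄ x₂ x₅ x₆, t24 e R D2 hc2 hB2 hRI h2 x₄ x₅ x₆ x₂, t24 e R D2 hc2 hB2 hRI h2 x₅ x₄ x₆ x₂, t24 e R D2 hc2 hB2 hRI h2 x₂ x₅ x₆ x₄, t24 e R D2 hc2 hB2 hRI h2 x₅ x₂ x₆ x₄, t24 e R D2 hc2 hB2 hRI h2 x₂ x₄ x₆ x₅, t24 e R D2 hc2 hB2 hRI h2 x₄ x₂ x₆ x₅]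


set_option maxHeartbeats 1000000 in
private lemma mainL6 (hR : IsCurv R) (c₀ : ℝ) (hc : ∀ x y, ric e R x y = c₀ * ⟪x, y⟫)
    (a b c d : V) :
    Qt e R a b c d + Qt e R a d c b + Qt e R c b a d + Qt e R c d a b =
      Qt e R b a d c + Qt e R b c d a + Qt e R d a b c + Qt e R d c b a := by
  have hr1 : R a b c d = R b a d c := curv_swap R hR a b c d
  have hr2 : R a d c b = R d a b c := curv_swap R hR a d c b
  have hr3 : R c b a d = R b c d a := curv_swap R hR c b a d
  have hr4 : R c d a b = R d c b a := curv_swap R hR c d a b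
  have hL1 : PPB e R a b c d = -(∑ i, ∑ j, R a (e i) b (e j) * R c d (e i) (e j)) := by
    rw [PPB]
    have hpt : ∀ i j : Fin n, R (e i) a b (e j) * R (e i) (e j) c d = -(R a (e i) b (e j) * R c d (e i) (e j)) := by
      intro i j; linear_combination (R (e i) (e j) c d) * ((1:ℝ) * (hR.1 (e i) a b (e j))) - (R a (e i) b (e j)) * ((1:ℝ) * (hR.2.1 (e i) (e j) c d))
    simp only [hpt]
    simp only [Finset.sum_neg_distrib]
  have hL2 : PPC e R a c b d = -(∑ i, ∑ j, R a (e i) c (e j) * R b (e i) d (e j)) := by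
    rw [PPC]
    have hpt : ∀ i j : Fin n, R (e i) a c (e j) * R (e i) b (e j) d = -(R a (e i) c (e j) * R b (e i) d (e j)) := by
      intro i j; linear_combination (R (e i) b (e j) d) * ((1:ℝ) * (hR.1 (e i) a c (e j))) - (R a (e i) c (e j)) * ((1:ℝ) * (hR.2.1 (e i) b (e j) d)) - (R a (e i) c (e j)) * ((1:ℝ) * (hR.1 (e j) d (e i) b)) - (R a (e i) c (e j)) * ((-1:ℝ) * (hR.2.1 d (e j) (e i) b)) - (R a (e i) c (e j)) * ((-1:ℝ) * (hR.1 (e i) b d (e j)))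
    simp only [hpt]
    simp only [Finset.sum_neg_distrib]
  have hL3 : PPD e R a d b c = (∑ i, ∑ j, R a (e i) d (e j) * R b (e i) c (e j)) := by
    rw [PPD]
    have hpt : ∀ i j : Fin n, R (e i) a d (e j) * R (e i) b c (e j) = R a (e i) d (e j) * R b (e i) c (e j) := by
      intro i j; linear_combination (R (e i) b c (e j)) * ((1:ℝ) * (hR.1 (e i) a d (e j))) - (R a (e i) d (e j)) * ((1:ℝ) * (hR.1 (e i) b c (e j)))
    simp only [hpt]
  have hL4 : PPB e R a d c b = (∑ i, ∑ j, R a (e i) d (e j) * R b c (e i) (e j)) := by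
    rw [PPB]
    have hpt : ∀ i j : Fin n, R (e i) a d (e j) * R (e i) (e j) c b = R a (e i) d (e j) * R b c (e i) (e j) := by
      intro i j; linear_combination (R (e i) (e j) c b) * ((1:ℝ) * (hR.1 (e i) a d (e j))) - (R a (e i) d (e j)) * ((1:ℝ) * (hR.2.1 (e i) (e j) c b)) - (R a (e i) d (e j)) * ((1:ℝ) * (hR.1 c b (e i) (e j)))
    simp only [hpt]
  have hL5 : PPC e R a c d b = -(∑ i, ∑ j, R a (e i) c (e j) * R b (e j) d (e i)) := by
    rw [PPC]
    have hpt : ∀ i j : Fin n, R (e i) a c (e j) * R (e i) d (e j) b = -(R a (e i) c (e j) * R b (e j) d (e i)) := by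
      intro i j; linear_combination (R (e i) d (e j) b) * ((1:ℝ) * (hR.1 (e i) a c (e j))) - (R a (e i) c (e j)) * ((1:ℝ) * (hR.2.1 (e i) d (e j) b)) - (R a (e i) c (e j)) * ((1:ℝ) * (hR.1 (e j) b (e i) d)) - (R a (e i) c (e j)) * ((-1:ℝ) * (hR.2.1 b (e j) (e i) d)) - (R a (e i) c (e j)) * ((-1:ℝ) * (hR.1 (e i) d b (e j))) - (R a (e i) c (e j)) * ((1:ℝ) * (hR.2.1 d (e i) b (e j)))
    simp only [hpt]
    simp only [Finset.sum_neg_distrib]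
  have hL6 : PPD e R a b d c = (∑ i, ∑ j, R a (e i) b (e j) * R c (e j) d (e i)) := by
    rw [PPD]
    have hpt : ∀ i j : Fin n, R (e i) a b (e j) * R (e i) d c (e j) = R a (e i) b (e j) * R c (e j) d (e i) := by
      intro i j; linear_combination (R (e i) d c (e j)) * ((1:ℝ) * (hR.1 (e i) a b (e j))) - (R a (e i) b (e j)) * ((1:ℝ) * (hR.2.1 (e i) d c (e j))) - (R a (e i) b (e j)) * ((1:ℝ) * (hR.1 c (e j) (e i) d)) - (R a (e i) b (e j)) * ((-1:ℝ) * (hR.2.1 (e j) c (e i) d)) - (R a (e i) b (e j)) * ((-1:ℝ) * (hR.1 (e i) d (e j) c)) - (R a (e i) b (e j)) * ((1:ℝ) * (hR.2.1 d (e i) (e j) c)) - (R a (e i) b (e j)) * ((1:ℝ) * (hR.1 (e j) c d (e i)))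
    simp only [hpt]
  have hL7 : PPB e R c b a d = (∑ i, ∑ j, R a d (e i) (e j) * R b (e i) c (e j)) := by
    rw [PPB]
    rw [Finset.sum_comm]
    have hpt : ∀ i j : Fin n, R (e j) c b (e i) * R (e j) (e i) a d = R a d (e i) (e j) * R b (e i) c (e j) := by
      intro i j; linear_combination (R (e j) (e i) a d) * ((1:ℝ) * (hR.2.1 (e j) c b (e i))) + (R (e j) (e i) a d) * ((1:ℝ) * (hR.1 b (e i) (e j) c)) + (R (e j) (e i) a d) * ((-1:ℝ) * (hR.2.1 (e i) b (e j) c)) + (R (e j) (e i) a d) * ((-1:ℝ) * (hR.1 (e j) c (e i) b)) + (R (e j) (e i) a d) * ((1:ℝ) * (hR.2.1 c (e j) (e i) b)) + (R (e j) (e i) a d) * ((1:ℝ) * (hR.1 (e i) b c (e j))) - (R b (e i) c (e j)) * ((1:ℝ) * (hR.2.1 (e j) (e i) a d)) - (R b (e i) c (e j)) * ((1:ℝ) * (hR.1 a d (e j) (e i))) - (R b (e i) c (e j)) * ((-1:ℝ) * (hR.2.1 d a (e j) (e i))) - (R b (e i) c (e j)) * ((-1:ℝ) * (hR.1 (e j)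 (e i) d a)) - (R b (e i) c (e j)) * ((1:ℝ) * (hR.2.1 (e i) (e j) d a)) - (R b (e i) c (e j)) * ((1:ℝ) * (hR.1 d a (e i) (e j)))
    simp only [hpt]
  have hL8 : PPC e R c a b d = -(∑ i, ∑ j, R a (e i) c (e j) * R b (e j) d (e i)) := by
    rw [PPC]
    rw [Finset.sum_comm]
    have hpt : ∀ i j : Fin n, R (e j) c a (e i) * R (e j) b (e i) d = -(R a (e i) c (e j) * R b (e j) d (e i)) := by
      intro i j; linear_combination (R (e j) b (e i) d) * ((1:ℝ) * (hR.2.1 (e j) c a (e i))) + (R (e j) b (e i) d) * ((1:ℝ) * (hR.1 a (e i) (e j) c)) + (R (e j) b (e i) d) * ((-1:ℝ) * (hR.2.1 (e i) a (e j) c)) + (R (e j) b (e i) d) * ((-1:ℝ) * (hR.1 (e j) c (e i) a)) + (R (e j) b (e i) d) * ((1:ℝ) * (hR.2.1 c (e j) (e i) a)) + (R (e j) b (e i) d) * ((1:ℝ) * (hR.1 (e i) a c (e j))) - (R a (e i) c (e j)) * ((1:ℝ) * (hR.2.1 (e j) b (e i) d)) - (R a (e i) c (e j)) * ((1:ℝ)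 * (hR.1 (e i) d (e j) b)) - (R a (e i) c (e j)) * ((-1:ℝ) * (hR.2.1 d (e i) (e j) b)) - (R a (e i) c (e j)) * ((-1:ℝ) * (hR.1 (e j) b d (e i)))
    simp only [hpt]
    simp only [Finset.sum_neg_distrib]
  have hL9 : PPD e R c d b a = (∑ i, ∑ j, R a (e i) b (e j) * R c (e j) d (e i)) := by
    rw [PPD]
    rw [Finset.sum_comm]
    have hpt : ∀ i j : Fin n, R (e j) c d (e i) * R (e j) b a (e i) = R a (e i) b (e j) * R c (e j) d (e i) := by
      intro i j; linear_combination (R (e j) b a (e i)) * ((1:ℝ) * (hR.1 (e j) c d (e i))) - (R c (e j) d (e i)) * ((1:ℝ) * (hR.2.1 (e j) b a (e i))) - (R c (e j) d (e i)) * ((1:ℝ) * (hR.1 a (e i) (e j) b)) - (R c (e j) d (e i)) * ((-1:ℝ) * (hR.2.1 (e i) a (e j) b)) - (R c (e j) d (e i)) * ((-1:ℝ) * (hR.1 (e j) b (e i) a)) - (R c (e j) d (e i)) * ((1:ℝ) * (hR.2.1 b (e j) (e i) a)) - (R c (e j) d (e i)) * ((1:ℝ) * (hR.1 (e i) a b (e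 j)))
    simp only [hpt]
  have hL10 : PPB e R c d a b = -(∑ i, ∑ j, R a b (e i) (e j) * R c (e i) d (e j)) := by
    rw [PPB]
    have hpt : ∀ i j : Fin n, R (e i) c d (e j) * R (e i) (e j) a b = -(R a b (e i) (e j) * R c (e i) d (e j)) := by
      intro i j; linear_combination (R (e i) (e j) a b) * ((1:ℝ) * (hR.1 (e i) c d (e j))) - (R c (e i) d (e j)) * ((1:ℝ) * (hR.2.1 (e i) (e j) a b))
    simp only [hpt]
    simp only [Finset.sum_neg_distrib]
  have hL11 : PPC e R c a d b = -(∑ i, ∑ j, R a (e i) c (e j) * R b (e i) d (e j)) := by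
    rw [PPC]
    rw [Finset.sum_comm]
    have hpt : ∀ i j : Fin n, R (e j) c a (e i) * R (e j) d (e i) b = -(R a (e i) c (e j) * R b (e i) d (e j)) := by
      intro i j; linear_combination (R (e j) d (e i) b) * ((1:ℝ) * (hR.2.1 (e j) c a (e i))) + (R (e j) d (e i) b) * ((1:ℝ) * (hR.1 a (e i) (e j) c)) + (R (e j) d (e i) b) * ((-1:ℝ) * (hR.2.1 (e i) a (e j) c)) + (R (e j) d (e i) b) * ((-1:ℝ) * (hR.1 (e j) c (e i) a)) + (R (e j) d (e i) b) * ((1:ℝ) * (hR.2.1 c (e j) (e i) a)) + (R (e j) d (e i) b) * ((1:ℝ) * (hR.1 (e i) a c (e j))) - (R a (e i) c (e j)) * ((1:ℝ) * (hR.2.1 (e j) d (e i) b)) - (R a (e i) c (e j)) * ((1:ℝ) * (hR.1 (e i) b (e j) d)) - (R a (e i) c (e j)) * ((-1:ℝ) * (hR.2.1 b (e i) (e j) d)) - (R a (e i) c (e j)) * ((-1:ℝ) * (hR.1 (e j) d b (e i))) - (R a (e i) c (e j)) * ((1:ℝ) * (hR.2.1 d (e j) b (e i)))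
    simp only [hpt]
    simp only [Finset.sum_neg_distrib]
  have hL12 : PPD e R c b d a = (∑ i, ∑ j, R a (e i) d (e j) * R b (e i) c (e j)) := by
    rw [PPD]
    rw [Finset.sum_comm]
    have hpt : ∀ i j : Fin n, R (e j) c b (e i) * R (e j) d a (e i) = R a (e i) d (e j) * R b (e i) c (e j) := by
      intro i j; linear_combination (R (e j) d a (e i)) * ((1:ℝ) * (hR.2.1 (e j) c b (e i))) + (R (e j) d a (e i)) * ((1:ℝ) * (hR.1 b (e i) (e j) c)) + (R (e j) d a (e i)) * ((-1:ℝ) * (hR.2.1 (e i) b (e j) c)) + (R (e j) d a (e i)) * ((-1:ℝ) * (hR.1 (e j) c (e i) b)) + (R (e j) d a (e i)) * ((1:ℝ) * (hR.2.1 c (e j) (e i) b)) + (R (e j) d a (e i)) * ((1:ℝ) * (hR.1 (e i) b c (e j))) - (R b (e i) c (e j)) * ((1:ℝ) * (hR.2.1 (e j) d a (e i))) - (R b (e i) c (e j)) * ((1:ℝ) * (hR.1 a (e i) (e j) d)) - (R b (e i) c (e j)) * ((-1:ℝ) * (hR.2.1 (e i) a (e j) d)) - (R b (e i) c (e j)) *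 ((-1:ℝ) * (hR.1 (e j) d (e i) a)) - (R b (e i) c (e j)) * ((1:ℝ) * (hR.2.1 d (e j) (e i) a)) - (R b (e i) c (e j)) * ((1:ℝ) * (hR.1 (e i) a d (e j)))
    simp only [hpt]
  have hR13 : PPB e R b a d c = -(∑ i, ∑ j, R a (e i) b (e j) * R c d (e i) (e j)) := by
    rw [PPB]
    rw [Finset.sum_comm]
    have hpt : ∀ i j : Fin n, R (e j) b a (e i) * R (e j) (e i) d c = -(R a (e i) b (e j) * R c d (e i) (e j)) := by
      intro i j; linear_combination (R (e j) (e i) d c) * ((1:ℝ) * (hR.2.1 (e j) b a (e i))) + (R (e j) (e i) d c) * ((1:ℝ) * (hR.1 a (e i) (e j) b)) + (R (e j) (e i) d c) * ((-1:ℝ) * (hR.2.1 (e i) a (e j) b)) + (R (e j) (e i) d c) * ((-1:ℝ) * (hR.1 (e j) b (e i) a)) + (R (e j) (e i) d c) * ((1:ℝ) * (hR.2.1 b (e j) (e i) a)) + (R (e j) (e i) d c) * ((1:ℝ) * (hR.1 (e i) a b (e j))) - (R a (e i) b (e j)) * ((1:ℝ) * (hR.2.1 (e j) (e i) d c)) -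 (R a (e i) b (e j)) * ((1:ℝ) * (hR.1 d c (e j) (e i))) - (R a (e i) b (e j)) * ((-1:ℝ) * (hR.2.1 c d (e j) (e i))) - (R a (e i) b (e j)) * ((-1:ℝ) * (hR.1 (e j) (e i) c d)) - (R a (e i) b (e j)) * ((1:ℝ) * (hR.2.1 (e i) (e j) c d))
    simp only [hpt]
    simp only [Finset.sum_neg_distrib]
  have hR14 : PPC e R b d a c = -(∑ i, ∑ j, R a (e i) c (e j) * R b (e i) d (e j)) := by
    rw [PPC]
    have hpt : ∀ i j : Fin n, R (e i) b d (e j) * R (e i) a (e j) c = -(R a (e i) c (e j) * R b (e i) d (e j)) := by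
      intro i j; linear_combination (R (e i) a (e j) c) * ((1:ℝ) * (hR.1 (e i) b d (e j))) - (R b (e i) d (e j)) * ((1:ℝ) * (hR.2.1 (e i) a (e j) c)) - (R b (e i) d (e j)) * ((1:ℝ) * (hR.1 (e j) c (e i) a)) - (R b (e i) d (e j)) * ((-1:ℝ) * (hR.2.1 c (e j) (e i) a)) - (R b (e i) d (e j)) * ((-1:ℝ) * (hR.1 (e i) a c (e j)))
    simp only [hpt]
    simp only [Finset.sum_neg_distrib]
  have hR15 : PPD e R b c a d = (∑ i, ∑ j, R a (e i) d (e j) * R b (e i) c (e j)) := by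
    rw [PPD]
    have hpt : ∀ i j : Fin n, R (e i) b c (e j) * R (e i) a d (e j) = R a (e i) d (e j) * R b (e i) c (e j) := by
      intro i j; linear_combination (R (e i) a d (e j)) * ((1:ℝ) * (hR.1 (e i) b c (e j))) - (R b (e i) c (e j)) * ((1:ℝ) * (hR.1 (e i) a d (e j)))
    simp only [hpt]
  have hR16 : PPB e R b c d a = (∑ i, ∑ j, R a d (e i) (e j) * R b (e i) c (e j)) := by
    rw [PPB]
    have hpt : ∀ i j : Fin n, R (e i) b c (e j) * R (e i) (e j) d a = R a d (e i) (e j) * R b (e i) c (e j) := by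
      intro i j; linear_combination (R (e i) (e j) d a) * ((1:ℝ) * (hR.1 (e i) b c (e j))) - (R b (e i) c (e j)) * ((1:ℝ) * (hR.2.1 (e i) (e j) d a)) - (R b (e i) c (e j)) * ((1:ℝ) * (hR.1 d a (e i) (e j)))
    simp only [hpt]
  have hR17 : PPC e R b d c a = -(∑ i, ∑ j, R a (e i) c (e j) * R b (e j) d (e i)) := by
    rw [PPC]
    rw [Finset.sum_comm]
    have hpt : ∀ i j : Fin n, R (e j) b d (e i) * R (e j) c (e i) a = -(R a (e i) c (e j) * R b (e j) d (e i)) := by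
      intro i j; linear_combination (R (e j) c (e i) a) * ((1:ℝ) * (hR.1 (e j) b d (e i))) - (R b (e j) d (e i)) * ((1:ℝ) * (hR.2.1 (e j) c (e i) a)) - (R b (e j) d (e i)) * ((1:ℝ) * (hR.1 (e i) a (e j) c)) - (R b (e j) d (e i)) * ((-1:ℝ) * (hR.2.1 a (e i) (e j) c)) - (R b (e j) d (e i)) * ((-1:ℝ) * (hR.1 (e j) c a (e i))) - (R b (e j) d (e i)) * ((1:ℝ) * (hR.2.1 c (e j) a (e i)))
    simp only [hpt]
    simp only [Finset.sum_neg_distrib]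
  have hR18 : PPD e R b a c d = (∑ i, ∑ j, R a (e i) b (e j) * R c (e j) d (e i)) := by
    rw [PPD]
    rw [Finset.sum_comm]
    have hpt : ∀ i j : Fin n, R (e j) b a (e i) * R (e j) c d (e i) = R a (e i) b (e j) * R c (e j) d (e i) := by
      intro i j; linear_combination (R (e j) c d (e i)) * ((1:ℝ) * (hR.2.1 (e j) b a (e i))) + (R (e j) c d (e i)) * ((1:ℝ) * (hR.1 a (e i) (e j) b)) + (R (e j) c d (e i)) * ((-1:ℝ) * (hR.2.1 (e i) a (e j) b)) + (R (e j) c d (e i)) * ((-1:ℝ) * (hR.1 (e j) b (e i) a)) + (R (e j) c d (e i)) * ((1:ℝ) * (hR.2.1 b (e j) (e i) a)) + (R (e j) c d (e i)) * ((1:ℝ) * (hR.1 (e i) a b (e j))) - (R a (e i) b (e j)) * ((1:ℝ) * (hR.1 (e j) c d (e i)))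
    simp only [hpt]
  have hR19 : PPB e R d a b c = (∑ i, ∑ j, R a (e i) d (e j) * R b c (e i) (e j)) := by
    rw [PPB]
    rw [Finset.sum_comm]
    have hpt : ∀ i j : Fin n, R (e j) d a (e i) * R (e j) (e i) b c = R a (e i) d (e j) * R b c (e i) (e j) := by
      intro i j; linear_combination (R (e j) (e i) b c) * ((1:ℝ) * (hR.2.1 (e j) d a (e i))) + (R (e j) (e i) b c) * ((1:ℝ) * (hR.1 a (e i) (e j) d)) + (R (e j) (e i) b c) * ((-1:ℝ) * (hR.2.1 (e i) a (e j) d)) + (R (e j) (e i) b c) * ((-1:ℝ) * (hR.1 (e j) d (e i) a)) + (R (e j) (e i) b c) * ((1:ℝ) * (hR.2.1 d (e j) (e i) a)) + (R (e j) (e i) b c) * ((1:ℝ) * (hR.1 (e i) a d (e j))) - (R a (e i) d (e j)) * ((1:ℝ) * (hR.2.1 (e j) (e i) b c)) - (R a (e i) d (e j)) * ((1:ℝ) * (hR.1 b c (e j) (e i))) - (R a (e i) d (e j)) * ((-1:ℝ) * (hR.2.1 c b (e j) (e i))) - (R a (e i) d (e j)) * ((-1:ℝ) * (hR.1 (e j)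 (e i) c b)) - (R a (e i) d (e j)) * ((1:ℝ) * (hR.2.1 (e i) (e j) c b)) - (R a (e i) d (e j)) * ((1:ℝ) * (hR.1 c b (e i) (e j)))
    simp only [hpt]
  have hR20 : PPC e R d b a c = -(∑ i, ∑ j, R a (e i) c (e j) * R b (e j) d (e i)) := by
    rw [PPC]
    have hpt : ∀ i j : Fin n, R (e i) d b (e j) * R (e i) a (e j) c = -(R a (e i) c (e j) * R b (e j) d (e i)) := by
      intro i j; linear_combination (R (e i) a (e j) c) * ((1:ℝ) * (hR.2.1 (e i) d b (e j))) + (R (e i) a (e j) c) * ((1:ℝ) * (hR.1 b (e j) (e i) d)) + (R (e i) a (e j) c) * ((-1:ℝ) * (hR.2.1 (e j) b (e i) d)) + (R (e i) a (e j) c) * ((-1:ℝ) * (hR.1 (e i) d (e j) b)) + (R (e i) a (e j) c) * ((1:ℝ) * (hR.2.1 d (e i) (e j) b)) + (R (e i) a (e j) c) * ((1:ℝ) * (hR.1 (e j) b d (e i))) - (R b (e j) d (e i)) * ((1:ℝ) * (hR.2.1 (e i) a (e j) c)) - (R b (e j) d (e i)) * ((1:ℝ) * (hR.1 (e j) c (e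 i) a)) - (R b (e j) d (e i)) * ((-1:ℝ) * (hR.2.1 c (e j) (e i) a)) - (R b (e j) d (e i)) * ((-1:ℝ) * (hR.1 (e i) a c (e j)))
    simp only [hpt]
    simp only [Finset.sum_neg_distrib]
  have hR21 : PPD e R d c a b = (∑ i, ∑ j, R a (e i) b (e j) * R c (e j) d (e i)) := by
    rw [PPD]
    have hpt : ∀ i j : Fin n, R (e i) d c (e j) * R (e i) a b (e j) = R a (e i) b (e j) * R c (e j) d (e i) := by
      intro i j; linear_combination (R (e i) a b (e j)) * ((1:ℝ) * (hR.2.1 (e i) d c (e j))) + (R (e i) a b (e j)) * ((1:ℝ) * (hR.1 c (e j) (e i) d)) + (R (e i) a b (e j)) * ((-1:ℝ) * (hR.2.1 (e j) c (e i) d)) + (R (e i) a b (e j)) * ((-1:ℝ) * (hR.1 (e i) d (e j) c)) + (R (e i) a b (e j)) * ((1:ℝ) * (hR.2.1 d (e i) (e j) c)) + (R (e i) a b (e j)) * ((1:ℝ) * (hR.1 (e j) c d (e i))) - (R c (e j) d (e i)) * ((1:ℝ) * (hR.1 (e i) a b (e j)))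
    simp only [hpt]
  have hR22 : PPB e R d c b a = -(∑ i, ∑ j, R a b (e i) (e j) * R c (e i) d (e j)) := by
    rw [PPB]
    rw [Finset.sum_comm]
    have hpt : ∀ i j : Fin n, R (e j) d c (e i) * R (e j) (e i) b a = -(R a b (e i) (e j) * R c (e i) d (e j)) := by
      intro i j; linear_combination (R (e j) (e i) b a) * ((1:ℝ) * (hR.2.1 (e j) d c (e i))) + (R (e j) (e i) b a) * ((1:ℝ) * (hR.1 c (e i) (e j) d)) + (R (e j) (e i) b a) * ((-1:ℝ) * (hR.2.1 (e i) c (e j) d)) + (R (e j) (e i) b a) * ((-1:ℝ) * (hR.1 (e j) d (e i) c)) + (R (e j) (e i) b a) * ((1:ℝ) * (hR.2.1 d (e j) (e i) c)) + (R (e j) (e i) b a) * ((1:ℝ) * (hR.1 (e i) c d (e j))) - (R c (e i) d (e j)) * ((1:ℝ) * (hR.2.1 (e j) (e i) b a)) - (R c (e i) d (e j)) * ((1:ℝ) * (hR.1 b a (e j) (e i))) - (R c (e i) d (e j)) * ((-1:ℝ) * (hR.2.1 a b (e j) (e i))) - (R c (e i) d (e j)) * ((-1:ℝ) * (hR.1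 (e j) (e i) a b)) - (R c (e i) d (e j)) * ((1:ℝ) * (hR.2.1 (e i) (e j) a b))
    simp only [hpt]
    simp only [Finset.sum_neg_distrib]
  have hR23 : PPC e R d b c a = -(∑ i, ∑ j, R a (e i) c (e j) * R b (e i) d (e j)) := by
    rw [PPC]
    rw [Finset.sum_comm]
    have hpt : ∀ i j : Fin n, R (e j) d b (e i) * R (e j) c (e i) a = -(R a (e i) c (e j) * R b (e i) d (e j)) := by
      intro i j; linear_combination (R (e j) c (e i) a) * ((1:ℝ) * (hR.2.1 (e j) d b (e i))) + (R (e j) c (e i) a) * ((1:ℝ) * (hR.1 b (e i) (e j) d)) + (R (e j) c (e i) a) * ((-1:ℝ) * (hR.2.1 (e i) b (e j) d)) + (R (e j) c (e i) a) * ((-1:ℝ) * (hR.1 (e j) d (e i) b)) + (R (e j) c (e i) a) * ((1:ℝ) * (hR.2.1 d (e j) (e i) b)) + (R (e j) c (e i) a) * ((1:ℝ) * (hR.1 (e i) b d (e j))) - (R b (e i) d (e j)) * ((1:ℝ) * (hR.2.1 (e j) c (e i) a)) - (R b (e i) d (e j)) * ((1:ℝ) * (hR.1 (e i) a (e j) c))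 - (R b (e i) d (e j)) * ((-1:ℝ) * (hR.2.1 a (e i) (e j) c)) - (R b (e i) d (e j)) * ((-1:ℝ) * (hR.1 (e j) c a (e i))) - (R b (e i) d (e j)) * ((1:ℝ) * (hR.2.1 c (e j) a (e i)))
    simp only [hpt]
    simp only [Finset.sum_neg_distrib]
  have hR24 : PPD e R d a c b = (∑ i, ∑ j, R a (e i) d (e j) * R b (e i) c (e j)) := by
    rw [PPD]
    rw [Finset.sum_comm]
    have hpt : ∀ i j : Fin n, R (e j) d a (e i) * R (e j) c b (e i) = R a (e i) d (e j) * R b (e i) c (e j) := by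
      intro i j; linear_combination (R (e j) c b (e i)) * ((1:ℝ) * (hR.2.1 (e j) d a (e i))) + (R (e j) c b (e i)) * ((1:ℝ) * (hR.1 a (e i) (e j) d)) + (R (e j) c b (e i)) * ((-1:ℝ) * (hR.2.1 (e i) a (e j) d)) + (R (e j) c b (e i)) * ((-1:ℝ) * (hR.1 (e j) d (e i) a)) + (R (e j) c b (e i)) * ((1:ℝ) * (hR.2.1 d (e j) (e i) a)) + (R (e j) c b (e i)) * ((1:ℝ) * (hR.1 (e i) a d (e j))) - (R a (e i) d (e j)) * ((1:ℝ) * (hR.2.1 (e j) c b (e i))) - (R a (e i) d (e j)) * ((1:ℝ) * (hR.1 b (e i) (e j) c)) - (R a (e i) d (e j)) * ((-1:ℝ) * (hR.2.1 (e i) b (e j) c)) - (R a (e i) d (e j)) * ((-1:ℝ) * (hR.1 (e j) c (e i) b)) - (R a (e i) d (e j)) * ((1:ℝ) * (hR.2.1 c (e j) (e i) b)) - (R a (e i) d (e j)) * ((1:ℝ) * (hR.1 (e i) b c (e j)))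
    simp only [hpt]
  rw [Qt_eq e R hR c₀ hc a b c d, Qt_eq e R hR c₀ hc a d c b, Qt_eq e R hR c₀ hc c b a d,
    Qt_eq e R hR c₀ hc c d a b, Qt_eq e R hR c₀ hc b a d c, Qt_eq e R hR c₀ hc b c d a,
    Qt_eq e R hR c₀ hc d a b c, Qt_eq e R hR c₀ hc d c b a]
  linear_combination c₀ * hr1 + c₀ * hr2 + c₀ * hr3 + c₀ * hr4 - hL1 - hL2 - hL3 - hL4 - hL5 - hL6 - hL7 - hL8 - hL9 - hL10 - hL11 - hL12 + hR13 + hR14 + hR15 + hR16 + hR17 + hR18 + hR19 + hR20 + hR21 + hR22 + hR23 + hR24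

private lemma young_sum (hR : IsCurv R)
    (hc2 : ∀ x y, IsCurv (D2 x y))
    (hB2 : ∀ x y z w u v, D2 x y z w u v + D2 x z w y u v + D2 x w y z u v = 0)
    (hRI : ∀ x y z₁ z₂ z₃ z₄, D2 x y z₁ z₂ z₃ z₄ - D2 y x z₁ z₂ z₃ z₄ =
      act4 (curvEnd e R x y) (toFun4 R) z₁ z₂ z₃ z₄)
    (h2 : ∀ x y z w, nabla2Ric e D2 x y z w = 0) (x₂ x₄ x₅ x₆ : V) :
    ∑ i, young42 (fun z₁ z₂ z₃ z₄ z₅ z₆ => D2 z₅ z₆ z₁ z₂ z₃ z₄) (e i) x₂ (e i) x₄ x₅ x₆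
      = 8 * (Qt e R x₅ x₂ x₆ x₄ + Qt e R x₆ x₂ x₅ x₄ + Qt e R x₅ x₄ x₆ x₂
          + Qt e R x₆ x₄ x₅ x₂) := by
  simp only [young42]
  rw [show ∀ f g h k : Fin n → ℝ, (∑ i, (f i - g i - h i + k i))
      = (∑ i, f i) - (∑ i, g i) - (∑ i, h i) + (∑ i, k i) from
    fun f g h k => by rw [Finset.sum_add_distrib, Finset.sum_sub_distrib,
      Finset.sum_sub_distrib]]
  rw [piece1 e R D2 hR hc2 hB2 hRI h2 x₂ x₄ x₅ x₆,
    piece2 e R D2 hR hc2 hB2 hRI h2 x₂ x₄ x₅ x₆,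
    piece3 e R D2 hR hc2 hB2 hRI h2 x₂ x₄ x₅ x₆,
    piece4 e R D2 hR hc2 hB2 hRI h2 x₂ x₄ x₅ x₆]
  have q1 := Qt_bianchi e R hR x₅ x₆ x₂ x₄
  have q2 := Qt_bianchi e R hR x₆ x₅ x₂ x₄
  have q3 := Qt_bianchi e R hR x₅ x₆ x₄ x₂
  have q4 := Qt_bianchi e R hR x₆ x₅ x₄ x₂
  linarith

end Statement13Aux


/-- For an Einstein two-jet, the Ricci tensor associated with the
Young(4,2)-symmetrized second covariant derivative is `−4(R*R(x₅,x₂,x₆,x₄)+R*R(x₅,x₄,x₆,x₂))`. -/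
theorem associated_nabla2Ric_einstein
    {V : Type*} [NormedAddCommGroup V] [InnerProductSpace ℝ V] {n : ℕ}
    (e : OrthonormalBasis (Fin n) ℝ V)
    (R : Curv V) (D1 : V →ₗ[ℝ] Curv V) (D2 : V →ₗ[ℝ] V →ₗ[ℝ] Curv V)
    (hjet : IsTwoJet e R D1 D2) (hE : IsEinsteinJet e R D1 D2) :
    ∀ x₂ x₄ x₅ x₆,
      -∑ i, young42 (fun z₁ z₂ z₃ z₄ z₅ z₆ => D2 z₅ z₆ z₁ z₂ z₃ z₄)
          (e i) x₂ (e i) x₄ x₅ x₆ =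
        -4 * (RstarR e R x₅ x₂ x₆ x₄ + RstarR e R x₅ x₄ x₆ x₂) := by
  obtain ⟨hR, hJ1, hc2, hB2, hRI⟩ := hjet
  obtain ⟨⟨c₀, hc⟩, hric1, h2⟩ := hE
  intro x₂ x₄ x₅ x₆
  rw [young_sum e R D2 hR hc2 hB2 hRI h2 x₂ x₄ x₅ x₆,
    RstarR_eq e R hR x₅ x₂ x₆ x₄, RstarR_eq e R hR x₅ x₄ x₆ x₂]
  have h6 := mainL6 e R hR c₀ hc x₂ x₅ x₄ x₆
  linarith

end CurvJet
end

section
/- For every algebraic curvature tensor R on V with Ricci tensor ric := ric_R, the Young(2,2) symmetrizer applied to the 4-tensor (x₁,x₂,x₃,x₄) ↦ (R_{x₁,x₂}·ric)(x₃,x₄) vanishes identically. -/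
open scoped RealInnerProductSpace

namespace CurvJet

variable {V : Type*} [NormedAddCommGroup V] [InnerProductSpace ℝ V] {n : ℕ}

/-- The Young(2,2)-symmetrization of
`(x₁,x₂,x₃,x₄) ↦ (R_{x₁,x₂}·ric)(x₃,x₄)` vanishes. -/
theorem young22_curvAction_ric_eq_zero
    {V : Type*} [NormedAddCommGroup V] [InnerProductSpace ℝ V] {n : ℕ}
    (e : OrthonormalBasis (Fin n) ℝ V)
    (R : Curv V) (hR : IsCurv R) :
    ∀ x₁ x₂ x₃ x₄,
      young22 (fun z₁ z₂ z₃ z₄ => act2 (curvEnd e R z₁ z₂) (ric e R) z₃ z₄) x₁ x₂ x₃ x₄ = 0 := by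
    obtain ⟨h1, h2, _⟩ := hR
    set f : V → V → V → V → ℝ :=
      fun z₁ z₂ z₃ z₄ => act2 (curvEnd e R z₁ z₂) (ric e R) z₃ z₄ with hf
    show ∀ x₁ x₂ x₃ x₄, young22 f x₁ x₂ x₃ x₄ = 0
    have hsym : ∀ x y, ric e R x y = ric e R y x := by
      intro x y
      unfold ric
      congr 1
      exact Finset.sum_congr rfl fun i _ => h2 x (e i) y (e i)
    have hce : ∀ a b z, curvEnd e R b a z = - curvEnd e R a b z := by
      intro a b z
      unfold curvEnd
      rw [← Finset.sum_neg_distrib]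
      exact Finset.sum_congr rfl fun i _ => by rw [h1 b a z (e i), neg_smul]
    have hricneg₁ : ∀ u y, ric e R (-u) y = - ric e R u y := by
      intro u y; rw [hsym (-u) y, hsym u y]; simp [ric, Finset.sum_neg_distrib]
    have hricneg₂ : ∀ x v, ric e R x (-v) = - ric e R x v := by
      intro x v; simp [ric, Finset.sum_neg_distrib]
    have hA : ∀ a b c d, f b a c d = - f a b c d := by
      intro a b c d
      simp only [hf, act2, hce a b, hricneg₁, hricneg₂]
      ring
    have hS : ∀ a b c d, f a b d c = f a b c d := by
      intro a b c d
      simp only [hf, act2]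
      rw [hsym (curvEnd e R a b d) c, hsym d (curvEnd e R a b c)]
      ring
    intro a b c d
    simp only [young22, rowSym22]
    linarith [hA a b c d, hA a b d c, hS a b c d, hA b c a d, hS b c d a,
      hA a d c b, hS d a b c, hS c d b a, hA a c b d, hS a c d b,
      hA b d c a, hS d b a c, hS d c b a]

end CurvJet
end

section
/- Let R be an algebraic curvature tensor on V with vanishing Ricci tensor (ric_R = 0), and fix x₂,x₄,x₅,x₆ ∈ V. Then Σᵢ Young(2,2)[(z₁,z₂,z₃,z₄) ↦ ⟪z₁,x₆⟫·R(z₃,z₂,x₅,z₄)](eᵢ,x₂,eᵢ,x₄) = 3·( R(x₆,x₂,x₅,x₄) + R(x₆,x₄,x₅,x₂) ). -/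
open scoped RealInnerProductSpace

namespace CurvJet

variable {V : Type*} [NormedAddCommGroup V] [InnerProductSpace ℝ V] {n : ℕ}

lemma contract_aux (e : OrthonormalBasis (Fin n) ℝ V) (x : V) (f : V →ₗ[ℝ] ℝ) :
    ∑ i, ⟪e i, x⟫ * f (e i) = f x := by
  conv_rhs => rw [← e.sum_repr' x]
  rw [map_sum]
  simp [smul_eq_mul]

/-- Trace of the Young(2,2)-symmetrization of
`(z₁,z₂,z₃,z₄) ↦ ⟪z₁,x₆⟫·R(z₃,z₂,x₅,z₄)` for Ricci-flat `R`. -/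
theorem young22_trace_metric_left
    {V : Type*} [NormedAddCommGroup V] [InnerProductSpace ℝ V] {n : ℕ}
    (e : OrthonormalBasis (Fin n) ℝ V)
    (R : Curv V) (hR : IsCurv R) (hric : ∀ x y, ric e R x y = 0)
    (x₂ x₄ x₅ x₆ : V) :
    ∑ i, young22 (fun z₁ z₂ z₃ z₄ => ⟪z₁, x₆⟫ * R z₃ z₂ x₅ z₄) (e i) x₂ (e i) x₄ =
      3 * (R x₆ x₂ x₅ x₄ + R x₆ x₄ x₅ x₂) := by
  have ha : ∀ x y z w, R x y z w = - R y x z w := hR.1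
  have c1 : ∑ i, ⟪e i, x₆⟫ * R (e i) x₂ x₅ x₄ = R x₆ x₂ x₅ x₄ :=
    contract_aux e x₆ ⟨⟨fun v => R v x₂ x₅ x₄, by intros; simp⟩, by intros; simp⟩
  have c2 : ∑ i, ⟪e i, x₆⟫ * R (e i) x₄ x₅ x₂ = R x₆ x₄ x₅ x₂ :=
    contract_aux e x₆ ⟨⟨fun v => R v x₄ x₅ x₂, by intros; simp⟩, by intros; simp⟩
  have c3 : ∑ i, ⟪e i, x₆⟫ * R x₂ (e i) x₅ x₄ = R x₂ x₆ x₅ x₄ :=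
    contract_aux e x₆ ⟨⟨fun v => R x₂ v x₅ x₄, by intros; simp⟩, by intros; simp⟩
  have c4 : ∑ i, ⟪e i, x₆⟫ * R x₂ x₄ x₅ (e i) = R x₂ x₄ x₅ x₆ :=
    contract_aux e x₆ ⟨⟨fun v => R x₂ x₄ x₅ v, by intros; simp⟩, by intros; simp⟩
  have c5 : ∑ i, ⟪e i, x₆⟫ * R x₄ x₂ x₅ (e i) = R x₄ x₂ x₅ x₆ :=
    contract_aux e x₆ ⟨⟨fun v => R x₄ x₂ x₅ v, by intros; simp⟩, by intros; simp⟩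
  have c6 : ∑ i, ⟪e i, x₆⟫ * R x₄ (e i) x₅ x₂ = R x₄ x₆ x₅ x₂ :=
    contract_aux e x₆ ⟨⟨fun v => R x₄ v x₅ x₂, by intros; simp⟩, by intros; simp⟩
  have t1 : ∀ a b : V, ∑ i, R a (e i) b (e i) = 0 := by
    intro a b
    have := hric a b
    unfold ric at this
    linarith
  have t2 : ∀ a b : V, ∑ i, R (e i) a b (e i) = 0 := by
    intro a b
    have : ∀ i, R (e i) a b (e i) = - R a (e i) b (e i) := fun i => ha _ _ _ _
    rw [Finset.sum_congr rfl fun i _ => this i, Finset.sum_neg_distrib, t1, neg_zero]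
  have t3 : ∀ a b : V, ∑ i, R (e i) (e i) a b = 0 := by
    intro a b
    have : ∀ i, R (e i) (e i) a b = 0 := by
      intro i
      have := ha (e i) (e i) a b
      linarith
    rw [Finset.sum_congr rfl fun i _ => this i, Finset.sum_const_zero]
  have expand : ∀ i, young22 (fun z₁ z₂ z₃ z₄ => ⟪z₁, x₆⟫ * R z₃ z₂ x₅ z₄) (e i) x₂ (e i) x₄ =
      ⟪e i, x₆⟫ * R (e i) x₂ x₅ x₄ + ⟪e i, x₆⟫ * R (e i) x₂ x₅ x₄
      + ⟪e i, x₆⟫ * R (e i) x₄ x₅ x₂ + ⟪e i, x₆⟫ * R (e i) x₄ x₅ x₂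
      - ⟪x₂, x₆⟫ * R (e i) (e i) x₅ x₄ - ⟪e i, x₆⟫ * R x₂ (e i) x₅ x₄
      - ⟪x₂, x₆⟫ * R (e i) x₄ x₅ (e i) - ⟪e i, x₆⟫ * R x₂ x₄ x₅ (e i)
      - ⟪e i, x₆⟫ * R x₄ x₂ x₅ (e i) - ⟪x₄, x₆⟫ * R (e i) x₂ x₅ (e i)
      - ⟪e i, x₆⟫ * R x₄ (e i) x₅ x₂ - ⟪x₄, x₆⟫ * R (e i) (e i) x₅ x₂
      + ⟪x₂, x₆⟫ * R x₄ (e i) x₅ (e i) + ⟪x₂, x₆⟫ * R x₄ (e i) x₅ (e i)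
      + ⟪x₄, x₆⟫ * R x₂ (e i) x₅ (e i) + ⟪x₄, x₆⟫ * R x₂ (e i) x₅ (e i) := by
    intro i
    simp only [young22, rowSym22]
    ring
  rw [Finset.sum_congr rfl fun i _ => expand i]
  simp only [Finset.sum_add_distrib, Finset.sum_sub_distrib, ← Finset.mul_sum]
  rw [c1, c2, c3, c4, c5, c6, t1, t1, t2, t2, t3, t3]
  have h1 := hR.1 x₂ x₆ x₅ x₄
  have h2 := hR.1 x₄ x₆ x₅ x₂
  have h3 := hR.1 x₂ x₄ x₅ x₆
  simp only [mul_zero]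
  linarith

end CurvJet
end

section
/- Let R be an algebraic curvature tensor on V with vanishing Ricci tensor (ric_R = 0), and fix x₂,x₄,x₅,x₆ ∈ V. Consider the 5-tensor T(z₁,z₂,z₃,z₄,z₅) := ⟪z₅,x₆⟫·R(z₁,z₂,z₃,z₄) with argument slots labeled 1,…,5, and let c be the Young symmetrizer of the tableau with rows {1,3,5}, {2,4} and columns {1,2}, {3,4}. Then Σᵢ (c·T)(eᵢ,x₂,eᵢ,x₄,x₅) = 6·( R(x₆,x₂,x₅,x₄) + R(x₆,x₄,x₅,x₂) ). -/
open scoped RealInnerProductSpace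

namespace CurvJet

variable {V : Type*} [NormedAddCommGroup V] [InnerProductSpace ℝ V] {n : ℕ}

section Aux17
variable {V : Type*} [NormedAddCommGroup V] [InnerProductSpace ℝ V] {n : ℕ}

private lemma rowSym5_eq' (T : V → V → V → V → V → ℝ) (z₁ z₂ z₃ z₄ z₅ : V) :
    rowSym5 T z₁ z₂ z₃ z₄ z₅ =
      T z₁ z₂ z₃ z₄ z₅ + T z₁ z₄ z₃ z₂ z₅
    + T z₃ z₂ z₁ z₄ z₅ + T z₃ z₄ z₁ z₂ z₅
    + T z₅ z₂ z₃ z₄ z₁ + T z₅ z₄ z₃ z₂ z₁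
    + T z₁ z₂ z₅ z₄ z₃ + T z₁ z₄ z₅ z₂ z₃
    + T z₃ z₂ z₅ z₄ z₁ + T z₃ z₄ z₅ z₂ z₁
    + T z₅ z₂ z₁ z₄ z₃ + T z₅ z₄ z₁ z₂ z₃ := by
  rw [rowSym5, show (Finset.univ : Finset (Equiv.Perm (Fin 3))) =
    {Equiv.refl _, Equiv.swap 0 1, Equiv.swap 0 2, Equiv.swap 1 2,
     Equiv.swap 0 1 * Equiv.swap 1 2, Equiv.swap 0 2 * Equiv.swap 1 2} from by decide]
  rw [Finset.sum_insert (by decide), Finset.sum_insert (by decide),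
      Finset.sum_insert (by decide), Finset.sum_insert (by decide),
      Finset.sum_insert (by decide), Finset.sum_singleton]
  norm_num [Equiv.swap_apply_def, Fin.ext_iff]
  simp only [Matrix.cons_val_two, Matrix.tail_cons, Matrix.head_cons]
  ring

private lemma subst1' (e : OrthonormalBasis (Fin n) ℝ V) (R : Curv V) (x a b c : V) :
    ∑ i, ⟪e i, x⟫ * R (e i) a b c = R x a b c := by
  conv_rhs => rw [← e.sum_repr' x]; simp [map_sum, smul_eq_mul]

private lemma subst2' (e : OrthonormalBasis (Fin n) ℝ V) (R : Curv V) (x a b c : V) :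
    ∑ i, ⟪e i, x⟫ * R a (e i) b c = R a x b c := by
  conv_rhs => rw [← e.sum_repr' x]; simp [map_sum, smul_eq_mul]

private lemma subst3' (e : OrthonormalBasis (Fin n) ℝ V) (R : Curv V) (x a b c : V) :
    ∑ i, ⟪e i, x⟫ * R a b (e i) c = R a b x c := by
  conv_rhs => rw [← e.sum_repr' x]; simp [map_sum, smul_eq_mul]

private lemma subst4' (e : OrthonormalBasis (Fin n) ℝ V) (R : Curv V) (x a b c : V) :
    ∑ i, ⟪e i, x⟫ * R a b c (e i) = R a b c x := by
  conv_rhs => rw [← e.sum_repr' x]; simp [map_sum, smul_eq_mul]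

variable (e : OrthonormalBasis (Fin n) ℝ V) (R : Curv V)
variable (hR : IsCurv R) (hric : ∀ x y, ric e R x y = 0)
include hR hric

private lemma tr24' (a b : V) : ∑ i, R a (e i) b (e i) = 0 := by
  have := hric a b; rw [ric, neg_eq_zero] at this; exact this
private lemma tr14' (a b : V) : ∑ i, R (e i) a b (e i) = 0 := by
  calc ∑ i, R (e i) a b (e i) = ∑ i, -R a (e i) b (e i) := by
        exact Finset.sum_congr rfl fun i _ => hR.1 (e i) a b (e i)
    _ = 0 := by rw [Finset.sum_neg_distrib, tr24' e R hR hric, neg_zero]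
private lemma tr23' (a b : V) : ∑ i, R a (e i) (e i) b = 0 := by
  calc ∑ i, R a (e i) (e i) b = ∑ i, -R b (e i) a (e i) := by
        refine Finset.sum_congr rfl fun i _ => ?_
        rw [hR.2.1 a (e i) (e i) b, hR.1 (e i) b a (e i)]
    _ = 0 := by rw [Finset.sum_neg_distrib, tr24' e R hR hric, neg_zero]
private lemma tr13' (a b : V) : ∑ i, R (e i) a (e i) b = 0 := by
  calc ∑ i, R (e i) a (e i) b = ∑ i, -R a (e i) (e i) b := by
        exact Finset.sum_congr rfl fun i _ => hR.1 (e i) a (e i) b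
    _ = 0 := by rw [Finset.sum_neg_distrib, tr23' e R hR hric, neg_zero]
private lemma tr12' (a b : V) : ∑ i, R (e i) (e i) a b = 0 := by
  refine Finset.sum_eq_zero fun i _ => ?_
  have := hR.1 (e i) (e i) a b; linarith
private lemma tr34' (a b : V) : ∑ i, R a b (e i) (e i) = 0 := by
  calc ∑ i, R a b (e i) (e i) = ∑ i, R (e i) (e i) a b := by
        exact Finset.sum_congr rfl fun i _ => hR.2.1 a b (e i) (e i)
    _ = 0 := tr12' e R hR hric a b
end Aux17

/-- Trace of the Young symmetrizer with rows `{1,3,5}`, `{2,4}` applied to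
the 5-tensor `(z₁,…,z₅) ↦ ⟪z₅,x₆⟫·R(z₁,z₂,z₃,z₄)` for Ricci-flat `R`. -/
theorem young32_trace_metric
    {V : Type*} [NormedAddCommGroup V] [InnerProductSpace ℝ V] {n : ℕ}
    (e : OrthonormalBasis (Fin n) ℝ V)
    (R : Curv V) (hR : IsCurv R) (hric : ∀ x y, ric e R x y = 0)
    (x₂ x₄ x₅ x₆ : V) :
    ∑ i, young5 (fun z₁ z₂ z₃ z₄ z₅ => ⟪z₅, x₆⟫ * R z₁ z₂ z₃ z₄) (e i) x₂ (e i) x₄ x₅ =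
      6 * (R x₆ x₂ x₅ x₄ + R x₆ x₄ x₅ x₂) := by
  simp only [young5, rowSym5_eq']
  rw [Finset.sum_add_distrib, Finset.sum_sub_distrib, Finset.sum_sub_distrib]
  simp only [Finset.sum_add_distrib, ← Finset.mul_sum]
  simp only [tr13' e R hR hric, tr14' e R hR hric, tr23' e R hR hric, tr24' e R hR hric,
      tr12' e R hR hric, tr34' e R hR hric, subst1' e R, subst2' e R, subst3' e R, subst4' e R,
      mul_zero, add_zero, zero_add]
  linear_combination 2*(hR.2.1 x₅ x₂ x₆ x₄) + 2*(hR.2.1 x₅ x₄ x₆ x₂) - 2*(hR.1 x₂ x₆ x₅ x₄)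
    - (hR.2.1 x₅ x₆ x₂ x₄) - (hR.2.1 x₅ x₄ x₂ x₆) - (hR.2.1 x₅ x₂ x₄ x₆)
    - 2*(hR.1 x₄ x₆ x₅ x₂) - (hR.2.1 x₅ x₆ x₄ x₂) - 2*(hR.1 x₄ x₂ x₅ x₆)

end CurvJet
end

section
/- Let R be an algebraic curvature tensor on V with vanishing Ricci tensor (ric_R = 0), and fix x₂,x₄,x₅,x₆ ∈ V. Then Σᵢ Young(2,2)[(z₁,z₂,z₃,z₄) ↦ ⟪z₁,z₃⟫·R(x₅,z₂,x₆,z₄)](eᵢ,x₂,eᵢ,x₄) = (2n − 4)·( R(x₅,x₂,x₆,x₄) + R(x₅,x₄,x₆,x₂) ). -/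
open scoped RealInnerProductSpace

namespace CurvJet

variable {V : Type*} [NormedAddCommGroup V] [InnerProductSpace ℝ V] {n : ℕ}

/-- Trace of the Young(2,2)-symmetrization of
`(z₁,z₂,z₃,z₄) ↦ ⟪z₁,z₃⟫·R(x₅,z₂,x₆,z₄)` for Ricci-flat `R`. -/
theorem young22_trace_metric_pair
    {V : Type*} [NormedAddCommGroup V] [InnerProductSpace ℝ V] {n : ℕ}
    (e : OrthonormalBasis (Fin n) ℝ V)
    (R : Curv V) (hR : IsCurv R) (hric : ∀ x y, ric e R x y = 0)
    (x₂ x₄ x₅ x₆ : V) :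
    ∑ i, young22 (fun z₁ z₂ z₃ z₄ => ⟪z₁, z₃⟫ * R x₅ z₂ x₆ z₄) (e i) x₂ (e i) x₄ =
      (2 * (n : ℝ) - 4) * (R x₅ x₂ x₆ x₄ + R x₅ x₄ x₆ x₂) := by
  have key2 : ∀ a b c : V, ∑ i, ⟪e i, a⟫ * R x₅ (e i) b c = R x₅ a b c := by
    intro a b c
    have h := congrArg (fun v => R x₅ v b c) (e.sum_repr' a)
    simpa [map_sum, LinearMap.sum_apply, map_smul, LinearMap.smul_apply, smul_eq_mul] using h
  have key4 : ∀ a b c : V, ∑ i, ⟪e i, a⟫ * R x₅ b c (e i) = R x₅ b c a := by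
    intro a b c
    have h := congrArg (fun v => R x₅ b c v) (e.sum_repr' a)
    simpa [map_sum, map_smul, smul_eq_mul] using h
  have keyric : ∑ i, R x₅ (e i) x₆ (e i) = 0 := by
    have := hric x₅ x₆; simp [ric] at this; linarith [this]
  have keyn : ∑ i, (⟪e i, e i⟫ : ℝ) = (n : ℝ) := by
    have h1 : ∀ i, (⟪e i, e i⟫ : ℝ) = 1 := fun i => by
      simp [real_inner_self_eq_norm_sq, e.orthonormal.1 i]
    simp [h1]
  have key2' : ∀ a b c : V, ∑ i, ⟪a, e i⟫ * R x₅ (e i) b c = R x₅ a b c := by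
    intro a b c; rw [← key2 a b c]
    exact Finset.sum_congr rfl fun i _ => by rw [real_inner_comm]
  have key4' : ∀ a b c : V, ∑ i, ⟪a, e i⟫ * R x₅ b c (e i) = R x₅ b c a := by
    intro a b c; rw [← key4 a b c]
    exact Finset.sum_congr rfl fun i _ => by rw [real_inner_comm]
  simp only [young22, rowSym22]
  simp only [Finset.sum_sub_distrib, Finset.sum_add_distrib, ← Finset.sum_mul,
    ← Finset.mul_sum, keyn, key2, key4, key2', key4', keyric, mul_zero]
  ring

end CurvJet
end

section
/- Let R be an algebraic curvature tensor on V with vanishing Ricci tensor (ric_R = 0), and let Ŝ := Young(4,2)[(x₁,…,x₆) ↦ ⟪x₅,x₆⟫·R(x₁,x₂,x₃,x₄)]. Then for all x₁,…,x₆ ∈ V: (i) −Σᵢ Ŝ(eᵢ,x₂,eᵢ,x₄,x₅,x₆) = −4(n+4)·( R(x₅,x₂,x₆,x₄) + R(x₅,x₄,x₆,x₂) ), and (ii) −Σᵢ Ŝ(x₁,x₂,x₃,x₄,eᵢ,eᵢ) = −24(n+4)·R(x₁,x₂,x₃,x₄). -/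
open scoped RealInnerProductSpace

namespace CurvJet

variable {V : Type*} [NormedAddCommGroup V] [InnerProductSpace ℝ V] {n : ℕ}

private lemma perm4_expand (f : Fin 4 → Fin 4 → Fin 4 → Fin 4 → ℝ) :
    ∑ σ : Equiv.Perm (Fin 4), f (σ 0) (σ 1) (σ 2) (σ 3) =
      f 0 1 2 3
      + f 0 1 3 2
      + f 0 2 1 3
      + f 0 2 3 1
      + f 0 3 1 2
      + f 0 3 2 1
      + f 1 0 2 3
      + f 1 0 3 2
      + f 1 2 0 3
      + f 1 2 3 0
      + f 1 3 0 2
      + f 1 3 2 0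
      + f 2 0 1 3
      + f 2 0 3 1
      + f 2 1 0 3
      + f 2 1 3 0
      + f 2 3 0 1
      + f 2 3 1 0
      + f 3 0 1 2
      + f 3 0 2 1
      + f 3 1 0 2
      + f 3 1 2 0
      + f 3 2 0 1
      + f 3 2 1 0 := by
  have permSum : ∀ (k : ℕ) (g : Equiv.Perm (Fin (k+1)) → ℝ),
      ∑ σ : Equiv.Perm (Fin (k+1)), g σ =
        ∑ p : Fin (k+1), ∑ q : Equiv.Perm (Fin k), g (Equiv.Perm.decomposeFin.symm (p, q)) := by
    intro k g
    rw [← Equiv.Perm.decomposeFin.symm.sum_comp, Fintype.sum_prod_type]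
  simp only [show (4:ℕ) = 3+1 from rfl, permSum, Fin.sum_univ_succ, Fin.sum_univ_zero,
    Finset.univ_unique, Finset.sum_singleton, Finset.sum_const, smul_eq_mul]
  simp only [show (3:Fin 4) = Fin.succ 2 from rfl, show (2:Fin 4) = Fin.succ 1 from rfl,
    show (1:Fin 4) = Fin.succ 0 from rfl, show (2:Fin 3) = Fin.succ 1 from rfl,
    show (1:Fin 3) = Fin.succ 0 from rfl, show (1:Fin 2) = Fin.succ 0 from rfl,
    Equiv.Perm.decomposeFin_symm_apply_zero, Equiv.Perm.decomposeFin_symm_apply_succ]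
  norm_num [Equiv.swap_apply_def, Fin.succ, Fin.ext_iff]
  simp only [show ∀ (h : 2 < 4), (⟨2,h⟩ : Fin 4) = (2:Fin 4) from fun _ => rfl,
    show ∀ (h : 3 < 4), (⟨3,h⟩ : Fin 4) = (3:Fin 4) from fun _ => rfl]
  ring

private lemma vec0 (a b c d : V) : ![a,b,c,d] (0 : Fin 4) = a := rfl
private lemma vec1 (a b c d : V) : ![a,b,c,d] (1 : Fin 4) = b := rfl
private lemma vec2 (a b c d : V) : ![a,b,c,d] (2 : Fin 4) = c := rfl
private lemma vec3 (a b c d : V) : ![a,b,c,d] (3 : Fin 4) = d := rfl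

private lemma rowSym42_expand_s19 (T : V → V → V → V → V → V → ℝ) (z₁ z₂ z₃ z₄ z₅ z₆ : V) :
    rowSym42 T z₁ z₂ z₃ z₄ z₅ z₆ =
      (T z₁ z₂ z₃ z₄ z₅ z₆ + T z₁ z₄ z₃ z₂ z₅ z₆)
      + (T z₁ z₂ z₃ z₄ z₆ z₅ + T z₁ z₄ z₃ z₂ z₆ z₅)
      + (T z₁ z₂ z₅ z₄ z₃ z₆ + T z₁ z₄ z₅ z₂ z₃ z₆)
      + (T z₁ z₂ z₅ z₄ z₆ z₃ + T z₁ z₄ z₅ z₂ z₆ z₃)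
      + (T z₁ z₂ z₆ z₄ z₃ z₅ + T z₁ z₄ z₆ z₂ z₃ z₅)
      + (T z₁ z₂ z₆ z₄ z₅ z₃ + T z₁ z₄ z₆ z₂ z₅ z₃)
      + (T z₃ z₂ z₁ z₄ z₅ z₆ + T z₃ z₄ z₁ z₂ z₅ z₆)
      + (T z₃ z₂ z₁ z₄ z₆ z₅ + T z₃ z₄ z₁ z₂ z₆ z₅)
      + (T z₃ z₂ z₅ z₄ z₁ z₆ + T z₃ z₄ z₅ z₂ z₁ z₆)
      + (T z₃ z₂ z₅ z₄ z₆ z₁ + T z₃ z₄ z₅ z₂ z₆ z₁)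
      + (T z₃ z₂ z₆ z₄ z₁ z₅ + T z₃ z₄ z₆ z₂ z₁ z₅)
      + (T z₃ z₂ z₆ z₄ z₅ z₁ + T z₃ z₄ z₆ z₂ z₅ z₁)
      + (T z₅ z₂ z₁ z₄ z₃ z₆ + T z₅ z₄ z₁ z₂ z₃ z₆)
      + (T z₅ z₂ z₁ z₄ z₆ z₃ + T z₅ z₄ z₁ z₂ z₆ z₃)
      + (T z₅ z₂ z₃ z₄ z₁ z₆ + T z₅ z₄ z₃ z₂ z₁ z₆)
      + (T z₅ z₂ z₃ z₄ z₆ z₁ + T z₅ z₄ z₃ z₂ z₆ z₁)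
      + (T z₅ z₂ z₆ z₄ z₁ z₃ + T z₅ z₄ z₆ z₂ z₁ z₃)
      + (T z₅ z₂ z₆ z₄ z₃ z₁ + T z₅ z₄ z₆ z₂ z₃ z₁)
      + (T z₆ z₂ z₁ z₄ z₃ z₅ + T z₆ z₄ z₁ z₂ z₃ z₅)
      + (T z₆ z₂ z₁ z₄ z₅ z₃ + T z₆ z₄ z₁ z₂ z₅ z₃)
      + (T z₆ z₂ z₃ z₄ z₁ z₅ + T z₆ z₄ z₃ z₂ z₁ z₅)
      + (T z₆ z₂ z₃ z₄ z₅ z₁ + T z₆ z₄ z₃ z₂ z₅ z₁)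
      + (T z₆ z₂ z₅ z₄ z₁ z₃ + T z₆ z₄ z₅ z₂ z₁ z₃)
      + (T z₆ z₂ z₅ z₄ z₃ z₁ + T z₆ z₄ z₅ z₂ z₃ z₁) := by
  have h := perm4_expand (fun a b c d =>
    T (![z₁,z₃,z₅,z₆] a) z₂ (![z₁,z₃,z₅,z₆] b) z₄ (![z₁,z₃,z₅,z₆] c) (![z₁,z₃,z₅,z₆] d)
    + T (![z₁,z₃,z₅,z₆] a) z₄ (![z₁,z₃,z₅,z₆] b) z₂ (![z₁,z₃,z₅,z₆] c) (![z₁,z₃,z₅,z₆] d))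
  simp only [vec0, vec1, vec2, vec3] at h
  exact h

set_option maxHeartbeats 4000000 in
/-- Traces of the canonical embedding
`Ŝ = Young(4,2)(g ⊗ R)` of a Ricci-flat algebraic curvature tensor. -/
theorem canonical_embedding_traces
    {V : Type*} [NormedAddCommGroup V] [InnerProductSpace ℝ V] {n : ℕ}
    (e : OrthonormalBasis (Fin n) ℝ V)
    (R : Curv V) (hR : IsCurv R) (hric : ∀ x y, ric e R x y = 0) :
    (∀ x₂ x₄ x₅ x₆,
      -∑ i, young42 (fun z₁ z₂ z₃ z₄ z₅ z₆ => ⟪z₅, z₆⟫ * R z₁ z₂ z₃ z₄)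
          (e i) x₂ (e i) x₄ x₅ x₆ =
        -4 * ((n : ℝ) + 4) * (R x₅ x₂ x₆ x₄ + R x₅ x₄ x₆ x₂)) ∧
    (∀ x₁ x₂ x₃ x₄,
      -∑ i, young42 (fun z₁ z₂ z₃ z₄ z₅ z₆ => ⟪z₅, z₆⟫ * R z₁ z₂ z₃ z₄)
          x₁ x₂ x₃ x₄ (e i) (e i) =
        -24 * ((n : ℝ) + 4) * R x₁ x₂ x₃ x₄) := by
  obtain ⟨h12, hpr, hbi⟩ := hR
  have hsw34 : ∀ a b c d : V, R a b c d = -(R a b d c) := by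
    intro a b c d
    linear_combination hpr a b c d + h12 d c a b + hpr a b d c
  have hsw34' : ∀ a b c d : V, R a b d c = -(R a b c d) := by
    intro a b c d; linear_combination hsw34 a b c d
  have hT24 : ∀ x y : V, ∑ i, R x (e i) y (e i) = 0 := by
    intro x y
    have h := hric x y
    rw [ric, neg_eq_zero] at h
    exact h
  have nlem : ∀ c : ℝ, ∑ _i : Fin n, ⟪e (_i), e (_i)⟫ * c = (n : ℝ) * c := by
    intro c
    have h1 : ∀ i : Fin n, ⟪e i, e i⟫ = (1:ℝ) := by
      intro i
      rw [real_inner_self_eq_norm_sq, e.orthonormal.1 i]; norm_num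
    simp [h1, Finset.card_univ]
  have expker : ∀ y : V, ∑ i, ⟪e i, y⟫ • e i = y := fun y => e.sum_repr' y
  have exp1 : ∀ y a b c : V, ∑ i, ⟪e i, y⟫ * R (e i) a b c = R y a b c := by
    intro y a b c
    calc ∑ i, ⟪e i, y⟫ * R (e i) a b c = R (∑ i, ⟪e i, y⟫ • e i) a b c := by
          simp [map_sum, LinearMap.sum_apply, map_smul, LinearMap.smul_apply, smul_eq_mul]
      _ = R y a b c := by rw [expker]
  have exp2 : ∀ y a b c : V, ∑ i, ⟪e i, y⟫ * R a (e i) b c = R a y b c := by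
    intro y a b c
    calc ∑ i, ⟪e i, y⟫ * R a (e i) b c = R a (∑ i, ⟪e i, y⟫ • e i) b c := by
          simp [map_sum, LinearMap.sum_apply, map_smul, LinearMap.smul_apply, smul_eq_mul]
      _ = R a y b c := by rw [expker]
  have exp3 : ∀ y a b c : V, ∑ i, ⟪e i, y⟫ * R a b (e i) c = R a b y c := by
    intro y a b c
    calc ∑ i, ⟪e i, y⟫ * R a b (e i) c = R a b (∑ i, ⟪e i, y⟫ • e i) c := by
          simp [map_sum, LinearMap.sum_apply, map_smul, LinearMap.smul_apply, smul_eq_mul]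
      _ = R a b y c := by rw [expker]
  have exp4 : ∀ y a b c : V, ∑ i, ⟪e i, y⟫ * R a b c (e i) = R a b c y := by
    intro y a b c
    calc ∑ i, ⟪e i, y⟫ * R a b c (e i) = R a b c (∑ i, ⟪e i, y⟫ • e i) := by
          simp [map_sum, map_smul, smul_eq_mul]
      _ = R a b c y := by rw [expker]
  have exp1' : ∀ y a b c : V, ∑ i, ⟪y, e i⟫ * R (e i) a b c = R y a b c := by
    intro y a b c; rw [← exp1 y a b c]; exact Finset.sum_congr rfl (fun i _ => by rw [real_inner_comm])
  have exp2' : ∀ y a b c : V, ∑ i, ⟪y, e i⟫ * R a (e i) b c = R a y b c := by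
    intro y a b c; rw [← exp2 y a b c]; exact Finset.sum_congr rfl (fun i _ => by rw [real_inner_comm])
  have exp3' : ∀ y a b c : V, ∑ i, ⟪y, e i⟫ * R a b (e i) c = R a b y c := by
    intro y a b c; rw [← exp3 y a b c]; exact Finset.sum_congr rfl (fun i _ => by rw [real_inner_comm])
  have exp4' : ∀ y a b c : V, ∑ i, ⟪y, e i⟫ * R a b c (e i) = R a b c y := by
    intro y a b c; rw [← exp4 y a b c]; exact Finset.sum_congr rfl (fun i _ => by rw [real_inner_comm])
  have ric24 : ∀ u v a b : V, ∑ i, ⟪u, v⟫ * R a (e i) b (e i) = 0 := by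
    intro u v a b; rw [← Finset.mul_sum, hT24 a b, mul_zero]
  have ric13 : ∀ u v a b : V, ∑ i, ⟪u, v⟫ * R (e i) a (e i) b = 0 := by
    intro u v a b
    rw [← Finset.mul_sum]
    have h0 : ∑ i, R (e i) a (e i) b = 0 := by
      rw [Finset.sum_congr rfl (fun i _ => show R (e i) a (e i) b = R a (e i) b (e i) by
        linear_combination h12 (e i) a (e i) b - hsw34' a (e i) b (e i))]
      exact hT24 a b
    rw [h0, mul_zero]
  have ric14 : ∀ u v a b : V, ∑ i, ⟪u, v⟫ * R (e i) a b (e i) = 0 := by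
    intro u v a b
    rw [← Finset.mul_sum]
    have h0 : ∑ i, R (e i) a b (e i) = 0 := by
      rw [Finset.sum_congr rfl (fun i _ => show R (e i) a b (e i) = -(R a (e i) b (e i)) by
        linear_combination h12 (e i) a b (e i))]
      rw [Finset.sum_neg_distrib, hT24 a b, neg_zero]
    rw [h0, mul_zero]
  have ric23 : ∀ u v a b : V, ∑ i, ⟪u, v⟫ * R a (e i) (e i) b = 0 := by
    intro u v a b
    rw [← Finset.mul_sum]
    have h0 : ∑ i, R a (e i) (e i) b = 0 := by
      rw [Finset.sum_congr rfl (fun i _ => show R a (e i) (e i) b = -(R a (e i) b (e i)) by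
        linear_combination hsw34' a (e i) b (e i))]
      rw [Finset.sum_neg_distrib, hT24 a b, neg_zero]
    rw [h0, mul_zero]
  have ric12 : ∀ u v a b : V, ∑ i, ⟪u, v⟫ * R (e i) (e i) a b = 0 := by
    intro u v a b
    have h0 : ∀ i : Fin n, R (e i) (e i) a b = 0 := by
      intro i; linear_combination ((1:ℝ)/2) * h12 (e i) (e i) a b
    simp [h0]
  have ric34 : ∀ u v a b : V, ∑ i, ⟪u, v⟫ * R a b (e i) (e i) = 0 := by
    intro u v a b
    have h0 : ∀ i : Fin n, R a b (e i) (e i) = 0 := by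
      intro i; linear_combination hpr a b (e i) (e i) + ((1:ℝ)/2) * h12 (e i) (e i) a b
    simp [h0]
  constructor
  · intro x₂ x₄ x₅ x₆
    simp only [young42, rowSym42_expand_s19, Finset.sum_add_distrib, Finset.sum_sub_distrib,
      nlem, exp1, exp2, exp3, exp4, exp1', exp2', exp3', exp4',
      ric12, ric13, ric14, ric23, ric24, ric34]
    linear_combination ((-4:ℝ) + (-2:ℝ) * (n:ℝ)) * h12 x₂ x₆ x₅ x₄ + ((4:ℝ) + (2:ℝ) * (n:ℝ)) * hsw34 x₂ x₆ x₄ x₅ + ((-4:ℝ) + (-2:ℝ) * (n:ℝ)) * h12 x₄ x₆ x₅ x₂ + ((4:ℝ) + (2:ℝ) * (n:ℝ)) * hsw34 x₄ x₆ x₂ x₅ + ((-4:ℝ) + (-2:ℝ) * (n:ℝ)) * hpr x₄ x₆ x₂ x₅ + ((12:ℝ) + (2:ℝ) * (n:ℝ)) * h12 x₂ x₅ x₆ x₄ + ((-12:ℝ) + (-2:ℝ) * (n:ℝ)) * hsw34 x₂ x₅ x₄ x₆ + ((12:ℝ) + (2:ℝ) * (n:ℝ)) * h12 x₄ x₅ x₆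 x₂ + ((-12:ℝ) + (-2:ℝ) * (n:ℝ)) * hsw34 x₄ x₅ x₂ x₆ + ((12:ℝ) + (2:ℝ) * (n:ℝ)) * hpr x₄ x₅ x₂ x₆ + ((2:ℝ) + (0:ℝ) * (n:ℝ)) * hsw34 x₂ x₆ x₄ x₅ + ((2:ℝ) + (0:ℝ) * (n:ℝ)) * hsw34 x₂ x₅ x₄ x₆ + ((2:ℝ) + (0:ℝ) * (n:ℝ)) * hsw34 x₂ x₄ x₅ x₆ + ((2:ℝ) + (0:ℝ) * (n:ℝ)) * hpr x₅ x₆ x₂ x₄ + ((2:ℝ) + (0:ℝ) * (n:ℝ)) * h12 x₄ x₅ x₂ x₆ + ((-2:ℝ) + (0:ℝ) * (n:ℝ)) * hpr x₄ x₅ x₂ x₆ + ((2:ℝ) + (0:ℝ) * (n:ℝ)) * h12 x₅ x₆ x₂ x₄ + ((-2:ℝ) + (0:ℝ) * (n:ℝ)) * hpr x₅ x₆ x₂ x₄ + ((2:ℝ) + (0:ℝ) * (n:ℝ)) * h12 x₄ x₆ x₂ x₅ + ((-2:ℝ) + (0:ℝ) * (n:ℝ)) * hpr x₄ x₆ x₂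 x₅ + ((2:ℝ) + (0:ℝ) * (n:ℝ)) * h12 x₂ x₄ x₅ x₆ + ((2:ℝ) + (0:ℝ) * (n:ℝ)) * hsw34 x₄ x₆ x₂ x₅ + ((-2:ℝ) + (0:ℝ) * (n:ℝ)) * hpr x₄ x₆ x₂ x₅ + ((2:ℝ) + (0:ℝ) * (n:ℝ)) * h12 x₂ x₄ x₆ x₅ + ((-2:ℝ) + (0:ℝ) * (n:ℝ)) * hsw34 x₂ x₄ x₅ x₆ + ((2:ℝ) + (0:ℝ) * (n:ℝ)) * hsw34 x₄ x₅ x₂ x₆ + ((-2:ℝ) + (0:ℝ) * (n:ℝ)) * hpr x₄ x₅ x₂ x₆ + ((2:ℝ) + (0:ℝ) * (n:ℝ)) * h12 x₂ x₅ x₄ x₆ + ((2:ℝ) + (0:ℝ) * (n:ℝ)) * hsw34 x₅ x₆ x₂ x₄ + ((-2:ℝ) + (0:ℝ) * (n:ℝ)) * hpr x₅ x₆ x₂ x₄ + ((2:ℝ) + (0:ℝ) * (n:ℝ)) * h12 x₂ x₆ x₄ x₅ + ((2:ℝ) + (0:ℝ) * (n:ℝ)) * h12 x₅ x₆ x₄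 x₂ + ((-2:ℝ) + (0:ℝ) * (n:ℝ)) * hsw34 x₅ x₆ x₂ x₄ + ((2:ℝ) + (0:ℝ) * (n:ℝ)) * hpr x₅ x₆ x₂ x₄
  · intro x₁ x₂ x₃ x₄
    simp only [young42, rowSym42_expand_s19, Finset.sum_add_distrib, Finset.sum_sub_distrib,
      nlem, exp1, exp2, exp3, exp4, exp1', exp2', exp3', exp4',
      ric12, ric13, ric14, ric23, ric24, ric34]
    linear_combination ((32:ℝ) + (8:ℝ) * (n:ℝ)) * hbi x₁ x₂ x₃ x₄ + ((-8:ℝ) + (-2:ℝ) * (n:ℝ)) * hsw34 x₁ x₄ x₂ x₃ + ((-8:ℝ) + (-2:ℝ) * (n:ℝ)) * h12 x₂ x₃ x₁ x₄ + ((8:ℝ) + (2:ℝ) * (n:ℝ)) * hpr x₂ x₃ x₁ x₄ + ((-8:ℝ) + (-2:ℝ) * (n:ℝ)) * hpr x₃ x₄ x₁ x₂ + ((8:ℝ) + (2:ℝ) * (n:ℝ)) * h12 x₁ x₂ x₃ x₄ + ((8:ℝ) + (2:ℝ) * (n:ℝ)) * hsw34 x₂ x₄ x₁ x₃ + ((-8:ℝ)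 + (-2:ℝ) * (n:ℝ)) * hpr x₂ x₄ x₁ x₃ + ((-24:ℝ) + (-6:ℝ) * (n:ℝ)) * h12 x₁ x₃ x₂ x₄ + ((8:ℝ) + (2:ℝ) * (n:ℝ)) * hsw34 x₃ x₄ x₁ x₂ + ((-8:ℝ) + (-2:ℝ) * (n:ℝ)) * hpr x₃ x₄ x₁ x₂ + ((8:ℝ) + (2:ℝ) * (n:ℝ)) * hsw34 x₁ x₂ x₃ x₄ + ((8:ℝ) + (2:ℝ) * (n:ℝ)) * hsw34 x₁ x₃ x₂ x₄ + ((8:ℝ) + (2:ℝ) * (n:ℝ)) * h12 x₂ x₄ x₁ x₃ + ((-8:ℝ) + (-2:ℝ) * (n:ℝ)) * hpr x₂ x₄ x₁ x₃ + ((8:ℝ) + (2:ℝ) * (n:ℝ)) * h12 x₃ x₄ x₁ x₂ + ((-8:ℝ) + (-2:ℝ) * (n:ℝ)) * hpr x₃ x₄ x₁ x₂ + ((-8:ℝ) + (-2:ℝ) * (n:ℝ)) * h12 x₁ x₂ x₄ x₃ + ((8:ℝ) + (2:ℝ) * (n:ℝ)) * hsw34 x₁ x₂ x₃ x₄ + ((-8:ℝ)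 + (-2:ℝ) * (n:ℝ)) * hsw34 x₂ x₃ x₁ x₄ + ((8:ℝ) + (2:ℝ) * (n:ℝ)) * hpr x₂ x₃ x₁ x₄ + ((-8:ℝ) + (-2:ℝ) * (n:ℝ)) * h12 x₁ x₄ x₂ x₃ + ((-8:ℝ) + (-2:ℝ) * (n:ℝ)) * h12 x₃ x₄ x₂ x₁ + ((8:ℝ) + (2:ℝ) * (n:ℝ)) * hsw34 x₃ x₄ x₁ x₂ + ((-8:ℝ) + (-2:ℝ) * (n:ℝ)) * hpr x₃ x₄ x₁ x₂ + ((-32:ℝ) + (-8:ℝ) * (n:ℝ)) * hpr x₂ x₃ x₁ x₄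

end CurvJet
end
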